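/- arXiv:0709.2099 — 2 statements merged into one kernel-verified Lean document; each statement's English description precedes it below -/
import Mathlib

section
/- Let P be a convex d-polytope in E^d, and for sufficiently large k let y_{v,k} > 0 (v ∈ vert(P)) be the unique scalars with f_k(w) = 1 for all vertices w, where f_k(x) := Σ_{v ∈ vert(P)} y_{v,k} ((1/deg(v)) Σ_{F facet containing v} (1 − q_F(x))^{2k})^{2k}. Then the semi-algebraic sets S_k := {x ∈ E^d : f_k(x) ≤ 1} converge to P in the Hausdorff distance as k → +∞; moreover P ⊆ S_k for these k. -/
noncomputable section

open Metric Set Finset Matrix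
open scoped RealInnerProductSpace BigOperators Classical

namespace AverkovHenk

abbrev E (d : ℕ) := EuclideanSpace ℝ (Fin d)

/-- Support function `h(P,u)` of `P` in direction `u`. -/
def supp {d : ℕ} (P : Set (E d)) (u : E d) : ℝ :=
  sSup ((fun x => ⟪u, x⟫) '' P)

/-- The normalized affine function `q_F` of the facet with outward unit normal `u`. -/
def qf {d : ℕ} (P : Set (E d)) (u : E d) (x : E d) : ℝ :=
  (supp P u - ⟪u, x⟫) / Metric.diam P

/-- The exposed face of `P` in direction `u`. -/
def faceOf {d : ℕ} (P : Set (E d)) (u : E d) : Set (E d) :=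
  {x ∈ P | ⟪u, x⟫ = supp P u}

/-- `u` is an outward unit normal of a facet (a `(d-1)`-dimensional face) of `P`. -/
def IsFacetNormal {d : ℕ} (P : Set (E d)) (u : E d) : Prop :=
  ‖u‖ = 1 ∧ Module.finrank ℝ ↥(vectorSpan ℝ (faceOf P u)) = d - 1

/-- The vertices of `P`, i.e. its extreme points. -/
def vertices {d : ℕ} (P : Set (E d)) : Set (E d) := Set.extremePoints ℝ P

/-- The `l`-th elementary symmetric function of `y_1, …, y_m`. -/
def esymm {m : ℕ} (y : Fin m → ℝ) (l : ℕ) : ℝ :=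
  ∑ J ∈ Finset.powersetCard l (Finset.univ : Finset (Fin m)), ∏ j ∈ J, y j

/-- A presentation of a convex `d`-polytope `P ⊆ E^d` by the `m` outward unit normals
`u 0, …, u (m-1)` of its facets, together with the induced representation
`P = {x | q_j(x) ≥ 0 for all j}`. -/
structure FacetRep (d m : ℕ) where
  P : Set (E d)
  u : Fin m → E d
  convex : Convex ℝ P
  compact : IsCompact P
  fulldim : (interior P).Nonempty
  inj : Function.Injective u
  facet : ∀ j, IsFacetNormal P (u j)
  complete : ∀ w : E d, IsFacetNormal P w → ∃ j, w = u j
  rep : P = {x | ∀ j, 0 ≤ qf P (u j) x}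

namespace FacetRep

variable {d m : ℕ}

/-- The vector `q(x) = (q_1(x), …, q_m(x))`. -/
def q (R : FacetRep d m) (x : E d) : Fin m → ℝ := fun j => qf R.P (R.u j) x

/-- The indices of the facets containing the point `v`. -/
def act (R : FacetRep d m) (v : E d) : Finset (Fin m) :=
  Finset.univ.filter fun j => R.q v j = 0

/-- The polytope is simple: each vertex lies on exactly `d` facets. -/
def Simple (R : FacetRep d m) : Prop :=
  ∀ v ∈ vertices R.P, (R.act v).card = d

/-- The enlarged polytope `P_ε`. -/
def Peps (R : FacetRep d m) (ε : ℝ) : Set (E d) := {x | ∀ j, -ε ≤ R.q x j}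

/-- The box `Π_{v,ε} = {x : |q_v(x)|_∞ ≤ ε}`. -/
def Piv (R : FacetRep d m) (v : E d) (ε : ℝ) : Set (E d) :=
  {x | ∀ j ∈ R.act v, |R.q x j| ≤ ε}

/-- The cone `C_v = {x : -σ_1(q_v(x)) ≥ (2/3)|q_v(x)|}` (Euclidean norm). -/
def Cv (R : FacetRep d m) (v : E d) : Set (E d) :=
  {x | (2/3) * Real.sqrt (∑ j ∈ R.act v, (R.q x j)^2) ≤ -(∑ j ∈ R.act v, R.q x j)}

/-- The polytope `P^v_{ε,δ}`. -/
def Pv (R : FacetRep d m) (v : E d) (ε δ : ℝ) : Set (E d) :=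
  {x | (∀ j ∈ R.act v, -ε ≤ R.q x j) ∧ ∀ j ∉ R.act v, δ ≤ R.q x j}

/-- `γ = max{1 - q_F(v) : F a facet, v a vertex not on F}`. -/
def gam (R : FacetRep d m) : ℝ :=
  sSup {c | ∃ v ∈ vertices R.P, ∃ j, R.q v j ≠ 0 ∧ c = 1 - R.q v j}

/-- The polynomial `f_k` built from weights `y_v` over the vertex set `V`. -/
def fk (R : FacetRep d m) (V : Finset (E d)) (y : ↥V → ℝ) (k : ℕ) (x : E d) : ℝ :=
  ∑ v : ↥V, y v * ((∑ j ∈ R.act v.1, (1 - R.q x j)^(2*k)) / (R.act v.1).card)^(2*k)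

/-- The matrix `A_k` indexed by the vertex set `V`. -/
def Ak (R : FacetRep d m) (V : Finset (E d)) (k : ℕ) : Matrix ↥V ↥V ℝ :=
  Matrix.of fun w v : ↥V => ((∑ j ∈ R.act v.1, (1 - R.q w.1 j)^(2*k)) / (R.act v.1).card)^(2*k)

/-- `deg(P)`: the maximal number of facets through a vertex. -/
def degP (R : FacetRep d m) (V : Finset (E d)) : ℕ := V.sup fun v => (R.act v).card

end FacetRep

/-- `|U_s^{-1}|_2` where `U_s` is the matrix with rows `u_j^T`, `j ∈ s`: the supremum of `‖x‖`
over the set where the Euclidean norm of `U_s x` is at most `1`. -/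
def invNormU {d m : ℕ} (u : Fin m → E d) (s : Finset (Fin m)) : ℝ :=
  sSup {c | ∃ x : E d, Real.sqrt (∑ j ∈ s, (⟪u j, x⟫)^2) ≤ 1 ∧ c = ‖x‖}

/-- `α = max_{v ∈ vert(P)} |U_v^{-1}|_2`. -/
def alpha {d m : ℕ} (R : FacetRep d m) (V : Finset (E d)) : ℝ :=
  sSup {a | ∃ v ∈ V, a = invNormU R.u (R.act v)}

/-- The normal cone `N(Q,x) = {u : ⟨x,u⟩ = h(Q,u)}`. -/
def normalCone {d : ℕ} (Q : Set (E d)) (x : E d) : Set (E d) :=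
  {u | ⟪u, x⟫ = supp Q u}

/-- `S` is an edge (a 1-dimensional face) of `P`. -/
def IsEdgeOf {d : ℕ} (P S : Set (E d)) : Prop :=
  IsExposed ℝ P S ∧ Module.finrank ℝ ↥(vectorSpan ℝ S) = 1

namespace FacetRep
variable {d m : ℕ} (R : FacetRep d m)

lemma P_nonempty : R.P.Nonempty := R.fulldim.mono interior_subset

lemma mem_iff (x : E d) : x ∈ R.P ↔ ∀ j, 0 ≤ R.q x j := by
  conv_lhs => rw [R.rep]
  rfl

lemma q_nonneg {x : E d} (hx : x ∈ R.P) (j : Fin m) : 0 ≤ R.q x j := (R.mem_iff x).1 hx j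

lemma exists_ball : ∃ z r, 0 < r ∧ Metric.ball z r ⊆ R.P := by
  obtain ⟨z, hz⟩ := R.fulldim
  obtain ⟨r, hr, hball⟩ := Metric.isOpen_iff.1 isOpen_interior z hz
  exact ⟨z, r, hr, hball.trans interior_subset⟩

lemma diam_pos (hd : 0 < d) : 0 < Metric.diam R.P := by
  obtain ⟨z, r, hr, hball⟩ := R.exists_ball
  set e : E d := EuclideanSpace.single (⟨0, hd⟩ : Fin d) (1:ℝ) with he
  have hne : ‖e‖ = 1 := by simp [he, EuclideanSpace.norm_single]
  have h1 : z + (r/2) • e ∈ R.P := by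
    apply hball
    simp only [Metric.mem_ball, dist_eq_norm, add_sub_cancel_left, norm_smul, hne, mul_one,
      Real.norm_eq_abs]
    rw [abs_of_pos (by linarith)]; linarith
  have h2 : z ∈ R.P := hball (Metric.mem_ball_self hr)
  have h3 : dist (z + (r/2) • e) z ≤ Metric.diam R.P :=
    Metric.dist_le_diam_of_mem R.compact.isBounded h1 h2
  rw [dist_eq_norm, add_sub_cancel_left, norm_smul, hne, mul_one, Real.norm_eq_abs,
    abs_of_pos (by linarith)] at h3
  linarith

lemma bddAbove_inner (u : E d) : BddAbove ((fun x => ⟪u, x⟫) '' R.P) :=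
  (R.compact.image (continuous_const.inner continuous_id)).bddAbove

lemma inner_le_supp {x : E d} (hx : x ∈ R.P) (u : E d) : ⟪u, x⟫ ≤ supp R.P u :=
  le_csSup (R.bddAbove_inner u) ⟨x, hx, rfl⟩

lemma q_le_one (hd : 0 < d) {x : E d} (hx : x ∈ R.P) (j : Fin m) : R.q x j ≤ 1 := by
  have hD := R.diam_pos hd
  have hsupp : supp R.P (R.u j) ≤ ⟪R.u j, x⟫ + Metric.diam R.P := by
    apply csSup_le (R.P_nonempty.image _)
    rintro - ⟨p, hp, rfl⟩
    have h1 : ⟪R.u j, p⟫ - ⟪R.u j, x⟫ ≤ ‖R.u j‖ * ‖p - x‖ := by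
      rw [← inner_sub_right]
      exact real_inner_le_norm _ _
    have h2 : ‖p - x‖ ≤ Metric.diam R.P := by
      rw [← dist_eq_norm]; exact Metric.dist_le_diam_of_mem R.compact.isBounded hp hx
    have := (R.facet j).1
    nlinarith
  rw [q, qf, div_le_one hD]
  linarith

lemma q_combo (u z x : E d) (P : Set (E d)) (t : ℝ) :
    qf P u (z + t • (x - z)) = (1 - t) * qf P u z + t * qf P u x := by
  unfold qf
  rw [inner_add_right, inner_smul_right, inner_sub_right]
  ring

end FacetRep

namespace FacetRep
variable {d m : ℕ} (R : FacetRep d m)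

lemma vertex_separate {v : E d} (hv : v ∈ vertices R.P) (w : E d) (hw : w ≠ v)
    (h : ∀ j ∈ R.act v, R.q w j = 0) : False := by
  have hvP : v ∈ R.P := hv.1
  set Q : ℝ → Fin m → ℝ := fun t j => (1 - t) * R.q v j + t * R.q w j with hQ
  have hall : ∀ᶠ t : ℝ in nhds 0, ∀ j, 0 ≤ Q t j := by
    rw [Filter.eventually_all]
    intro j
    by_cases hj : j ∈ R.act v
    · have h1 : R.q v j = 0 := (Finset.mem_filter.1 hj).2
      have h2 : R.q w j = 0 := h j hj
      filter_upwards with t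
      simp [hQ, h1, h2]
    · have h1 : R.q v j ≠ 0 := by
        simpa [act] using hj
      have h1' : 0 < R.q v j := lt_of_le_of_ne (R.q_nonneg hvP j) (Ne.symm h1)
      have hcont : Continuous fun t : ℝ => Q t j := by
        simp only [hQ]; fun_prop
      have : (fun t : ℝ => Q t j) ⁻¹' Set.Ioi 0 ∈ nhds (0 : ℝ) := by
        apply (isOpen_Ioi.preimage hcont).mem_nhds
        simp [hQ, h1']
      filter_upwards [this] with t ht using le_of_lt ht
  have hall' : ∀ᶠ t : ℝ in nhds 0, ∀ j, 0 ≤ Q (-t) j := by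
    have hneg : Filter.Tendsto (fun t : ℝ => -t) (nhds 0) (nhds 0) := by
      simpa using (continuous_neg (G := ℝ)).tendsto 0
    exact hneg.eventually hall
  obtain ⟨t, ⟨hQ1, hQ2⟩, ht⟩ :=
    (((hall.and hall').filter_mono nhdsWithin_le_nhds).and
      (eventually_mem_nhdsWithin (s := Set.Ioi (0:ℝ)))).exists
  have hmem : ∀ s : ℝ, (∀ j, 0 ≤ Q s j) → v + s • (w - v) ∈ R.P := by
    intro s hs
    rw [R.mem_iff]
    intro j
    have := q_combo (R.u j) v w R.P s
    rw [show R.q (v + s • (w - v)) j = qf R.P (R.u j) (v + s • (w - v)) from rfl, this]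
    exact hs j
  have hx1 : v + t • (w - v) ∈ R.P := hmem t hQ1
  have hx2 : v + (-t) • (w - v) ∈ R.P := hmem (-t) hQ2
  have hseg : v ∈ openSegment ℝ (v + t • (w - v)) (v + (-t) • (w - v)) :=
    ⟨1/2, 1/2, one_half_pos, one_half_pos, by norm_num, by module⟩
  have heq := hv.2 hx1 hx2 hseg
  have h0 : t • (w - v) = 0 := by
    have := heq
    rwa [add_eq_left] at this
  rcases smul_eq_zero.1 h0 with h | h
  · exact (ne_of_gt ht) h
  · exact hw (by rwa [sub_eq_zero] at h)

lemma act_nonempty (hd : 0 < d) {v : E d} (hv : v ∈ vertices R.P) : (R.act v).Nonempty := by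
  by_contra hne
  set e : E d := EuclideanSpace.single (⟨0, hd⟩ : Fin d) (1:ℝ) with he
  have hne1 : e ≠ 0 := by
    intro h0
    have : ‖e‖ = 1 := by simp [he, EuclideanSpace.norm_single]
    rw [h0] at this; simp at this
  refine R.vertex_separate hv (v + e) ?_ ?_
  · intro h
    exact hne1 (by simpa [add_eq_left] using h)
  · intro j hj
    exact absurd ⟨j, hj⟩ hne

lemma exists_pos_q {u v : E d} (hu : u ∈ vertices R.P) (hv : v ∈ vertices R.P)
    (hne : v ≠ u) : ∃ j ∈ R.act u, 0 < R.q v j := by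
  by_contra hcon
  push_neg at hcon
  refine R.vertex_separate hu v hne fun j hj => ?_
  exact le_antisymm (hcon j hj) (R.q_nonneg hv.1 j)

lemma facet_has_vertex (hd : 0 < d) (j : Fin m) : ∃ v ∈ vertices R.P, R.q v j = 0 := by
  set u := R.u j with hu
  have hcont : Continuous fun x : E d => ⟪u, x⟫ := continuous_const.inner continuous_id
  obtain ⟨x₀, hx₀, hmax⟩ := R.compact.exists_isMaxOn R.P_nonempty hcont.continuousOn
  have hsupp_eq : supp R.P u = ⟪u, x₀⟫ := by
    refine le_antisymm (csSup_le (R.P_nonempty.image _) ?_) (R.inner_le_supp hx₀ u)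
    rintro - ⟨p, hp, rfl⟩
    exact hmax hp
  set F := faceOf R.P u with hF
  have hFP : F ⊆ R.P := fun x hx => hx.1
  have hFx₀ : x₀ ∈ F := ⟨hx₀, hsupp_eq.symm⟩
  have hFclosed : IsClosed F := by
    have : F = R.P ∩ (fun x : E d => ⟪u, x⟫) ⁻¹' {supp R.P u} := by
      ext x; simp [hF, faceOf, Set.mem_preimage]
    rw [this]
    exact R.compact.isClosed.inter (isClosed_singleton.preimage hcont)
  have hFcompact : IsCompact F := R.compact.of_isClosed_subset hFclosed hFP
  obtain ⟨w, hwF⟩ := hFcompact.extremePoints_nonempty ⟨x₀, hFx₀⟩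
  have hwP : w ∈ vertices R.P := by
    refine ⟨hwF.1.1, ?_⟩
    intro x₁ hx₁ x₂ hx₂ hseg
    obtain ⟨a, b, ha, hb, hab, hsum⟩ := hseg
    have h₁ : ⟪u, x₁⟫ ≤ supp R.P u := R.inner_le_supp hx₁ u
    have h₂ : ⟪u, x₂⟫ ≤ supp R.P u := R.inner_le_supp hx₂ u
    have hw2 : ⟪u, w⟫ = supp R.P u := hwF.1.2
    have hsum' : a * ⟪u, x₁⟫ + b * ⟪u, x₂⟫ = supp R.P u := by
      rw [← hw2, ← hsum, inner_add_right, real_inner_smul_right, real_inner_smul_right]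
    have e₁ : ⟪u, x₁⟫ = supp R.P u := by
      by_contra hne'
      have hlt : ⟪u, x₁⟫ < supp R.P u := lt_of_le_of_ne h₁ hne'
      have := mul_lt_mul_of_pos_left hlt ha
      have := mul_le_mul_of_nonneg_left h₂ hb.le
      have key : a * supp R.P u + b * supp R.P u = supp R.P u := by
        rw [← add_mul, hab, one_mul]
      linarith
    have e₂ : ⟪u, x₂⟫ = supp R.P u := by
      by_contra hne'
      have hlt : ⟪u, x₂⟫ < supp R.P u := lt_of_le_of_ne h₂ hne'
      have := mul_lt_mul_of_pos_left hlt hb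
      have := mul_le_mul_of_nonneg_left h₁ ha.le
      have key : a * supp R.P u + b * supp R.P u = supp R.P u := by
        rw [← add_mul, hab, one_mul]
      linarith
    exact hwF.2 ⟨hx₁, e₁⟩ ⟨hx₂, e₂⟩ ⟨a, b, ha, hb, hab, hsum⟩
  refine ⟨w, hwP, ?_⟩
  show qf R.P (R.u j) w = 0
  rw [qf, ← hu, hwF.1.2, sub_self, zero_div]

end FacetRep


namespace FacetRep
variable {d m : ℕ} (R : FacetRep d m)

lemma convexOn_finset_sum {ι : Type*} {s : Finset ι} {f : ι → E d → ℝ}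
    (h : ∀ i ∈ s, ConvexOn ℝ Set.univ (f i)) :
    ConvexOn ℝ Set.univ fun x => ∑ i ∈ s, f i x := by
  induction s using Finset.cons_induction with
  | empty => simpa using convexOn_const (0:ℝ) convex_univ
  | cons i s hi ih =>
    simp only [Finset.sum_cons]
    exact (h i (Finset.mem_cons_self _ _)).add (ih fun j hj => h j (Finset.mem_cons_of_mem hj))

def qAffine (j : Fin m) : E d →ᵃ[ℝ] ℝ :=
  AffineMap.const ℝ (E d) (1 - supp R.P (R.u j) / Metric.diam R.P) +
    ((Metric.diam R.P)⁻¹ • (innerSL ℝ (R.u j)).toLinearMap).toAffineMap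

lemma qAffine_apply (j : Fin m) (x : E d) : R.qAffine j x = 1 - R.q x j := by
  show (AffineMap.const ℝ (E d) (1 - supp R.P (R.u j) / Metric.diam R.P) +
      ((Metric.diam R.P)⁻¹ • (innerSL ℝ (R.u j)).toLinearMap).toAffineMap) x
    = 1 - qf R.P (R.u j) x
  simp only [AffineMap.coe_add, Pi.add_apply, AffineMap.const_apply,
    LinearMap.coe_toAffineMap, LinearMap.smul_apply, ContinuousLinearMap.coe_coe,
    innerSL_apply_apply, qf, smul_eq_mul]
  ring

lemma q_continuous (j : Fin m) : Continuous fun x : E d => R.q x j := by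
  show Continuous fun x : E d => qf R.P (R.u j) x
  unfold qf
  exact (continuous_const.sub (continuous_const.inner continuous_id)).div_const _

lemma fk_continuous (V : Finset (E d)) (y : ↥V → ℝ) (k : ℕ) :
    Continuous (R.fk V y k) := by
  unfold fk
  apply continuous_finset_sum
  intro v _
  refine continuous_const.mul (Continuous.pow ?_ _)
  refine Continuous.div_const (continuous_finset_sum _ fun j _ => ?_) _
  exact (continuous_const.sub (R.q_continuous j)).pow _

lemma fk_convexOn (V : Finset (E d)) (y : ↥V → ℝ) (hy : ∀ v, 0 ≤ y v) (k : ℕ) :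
    ConvexOn ℝ Set.univ (R.fk V y k) := by
  unfold fk
  apply convexOn_finset_sum (f := fun (v : ↥V) x =>
    y v * ((∑ j ∈ R.act v.1, (1 - R.q x j)^(2*k)) / (R.act v.1).card)^(2*k))
  intro v _
  have hinner : ConvexOn ℝ Set.univ fun x =>
      (∑ j ∈ R.act v.1, (1 - R.q x j)^(2*k)) / ((R.act v.1).card : ℝ) := by
    have hsum : ConvexOn ℝ Set.univ fun x =>
        ∑ j ∈ R.act v.1, (1 - R.q x j)^(2*k) := by
      apply convexOn_finset_sum
      intro j _
      have heven : ConvexOn ℝ Set.univ fun t : ℝ => t ^ (2*k) :=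
        (even_two_mul k).convexOn_pow
      have := heven.comp_affineMap (R.qAffine j)
      have hpre : (R.qAffine j) ⁻¹' Set.univ = Set.univ := Set.preimage_univ
      rw [hpre] at this
      have heq : ((fun t : ℝ => t ^ (2*k)) ∘ (R.qAffine j)) = fun x => (1 - R.q x j)^(2*k) := by
        funext x
        simp only [Function.comp_apply, R.qAffine_apply j x]
      rwa [heq] at this
    have hc : (0:ℝ) ≤ (((R.act v.1).card : ℝ))⁻¹ := by positivity
    have := hsum.smul hc
    convert this using 2 with x
    · rfl
    · rfl
    · simp [smul_eq_mul, div_eq_mul_inv, mul_comm]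
  have hnonneg : ∀ ⦃x : E d⦄, x ∈ Set.univ →
      0 ≤ (∑ j ∈ R.act v.1, (1 - R.q x j)^(2*k)) / ((R.act v.1).card : ℝ) := by
    intro x _
    apply div_nonneg _ (Nat.cast_nonneg _)
    exact Finset.sum_nonneg fun j _ => (even_two_mul k).pow_nonneg _
  have hpow : ConvexOn ℝ Set.univ fun x =>
      ((∑ j ∈ R.act v.1, (1 - R.q x j)^(2*k)) / ((R.act v.1).card : ℝ))^(2*k) := by
    refine ⟨convex_univ, fun x _ y _ a b ha hb hab => ?_⟩
    set g := fun x : E d => (∑ j ∈ R.act v.1, (1 - R.q x j)^(2*k)) / ((R.act v.1).card : ℝ)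
    have h1 : g (a • x + b • y) ≤ a * g x + b * g y := by
      have := hinner.2 (Set.mem_univ x) (Set.mem_univ y) ha hb hab
      simpa [smul_eq_mul] using this
    have h2 : g (a • x + b • y) ^ (2*k) ≤ (a * g x + b * g y) ^ (2*k) := by
      apply pow_le_pow_left₀ (hnonneg (Set.mem_univ _)) h1
    have h3 : (a * g x + b * g y) ^ (2*k) ≤ a * (g x ^ (2*k)) + b * (g y ^ (2*k)) := by
      have := (convexOn_pow (𝕜 := ℝ) (2*k)).2 (Set.mem_Ici.2 (hnonneg (Set.mem_univ x)))
        (Set.mem_Ici.2 (hnonneg (Set.mem_univ y))) ha hb hab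
      simpa [smul_eq_mul] using this
    simpa [smul_eq_mul] using h2.trans h3
  simpa only [smul_eq_mul] using hpow.smul (hy v)

end FacetRep


namespace FacetRep
variable {d m : ℕ} (R : FacetRep d m)

lemma subset_Sk (V : Finset (E d)) (hV : (↑V : Set (E d)) = vertices R.P)
    (y : ↥V → ℝ) (hy0 : ∀ v, 0 ≤ y v) (k : ℕ) (h1 : ∀ w : ↥V, R.fk V y k w.1 = 1) :
    R.P ⊆ {x : E d | R.fk V y k x ≤ 1} := by
  have hclosed : IsClosed {x : E d | R.fk V y k x ≤ 1} :=
    isClosed_le (R.fk_continuous V y k) continuous_const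
  have hhull : convexHull ℝ (↑V : Set (E d)) ⊆ {x | R.fk V y k x ≤ 1} := by
    intro x hx
    obtain ⟨w, hwV, hle⟩ := (R.fk_convexOn V y hy0 k).exists_ge_of_mem_convexHull
      (Set.subset_univ _) hx
    have : R.fk V y k w = 1 := h1 ⟨w, hwV⟩
    exact Set.mem_setOf.2 (by rw [← this]; exact hle)
  have hKM := closure_convexHull_extremePoints R.compact R.convex
  have hEP : Set.extremePoints ℝ R.P = (↑V : Set (E d)) := hV.symm
  intro x hx
  have hx' : x ∈ closure (convexHull ℝ (↑V : Set (E d))) := by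
    rw [← hEP, hKM]; exact hx
  exact closure_minimal hhull hclosed hx'

def gk (R : FacetRep d m) (k : ℕ) (v x : E d) : ℝ :=
  ((∑ j ∈ R.act v, (1 - R.q x j)^(2*k)) / (R.act v).card)^(2*k)

lemma fk_eq (V : Finset (E d)) (y : ↥V → ℝ) (k : ℕ) (x : E d) :
    R.fk V y k x = ∑ v : ↥V, y v * R.gk k v.1 x := rfl

lemma gk_nonneg (k : ℕ) (v x : E d) : 0 ≤ R.gk k v x := (even_two_mul k).pow_nonneg _

lemma gk_self (hd : 0 < d) (k : ℕ) {v : E d} (hv : v ∈ vertices R.P) : R.gk k v v = 1 := by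
  have hcard : (0:ℝ) < (R.act v).card := by
    exact_mod_cast Finset.card_pos.2 (R.act_nonempty hd hv)
  have hsum : ∑ j ∈ R.act v, (1 - R.q v j)^(2*k) = (R.act v).card := by
    rw [Finset.sum_congr rfl fun j hj => ?_, Finset.sum_const, nsmul_eq_mul, mul_one]
    rw [(Finset.mem_filter.1 hj).2, sub_zero, one_pow]
  rw [gk, hsum, div_self (ne_of_gt hcard), one_pow]

lemma y_le_one (hd : 0 < d) (V : Finset (E d)) (hV : (↑V : Set (E d)) = vertices R.P)
    (y : ↥V → ℝ) (hy0 : ∀ v, 0 ≤ y v) (k : ℕ) (h1 : ∀ w : ↥V, R.fk V y k w.1 = 1)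
    (v : ↥V) : y v ≤ 1 := by
  have hvv : (v : E d) ∈ vertices R.P := by rw [← hV]; exact v.2
  have := h1 v
  rw [R.fk_eq] at this
  have hle : y v * R.gk k v.1 v.1 ≤ ∑ u : ↥V, y u * R.gk k u.1 v.1 :=
    Finset.single_le_sum (fun u _ => mul_nonneg (hy0 u) (R.gk_nonneg k u.1 v.1))
      (Finset.mem_univ v)
  rw [R.gk_self hd k hvv, mul_one] at hle
  linarith [this ▸ hle]

lemma exists_beta (hd : 0 < d) (V : Finset (E d)) (hV : (↑V : Set (E d)) = vertices R.P) :
    ∃ β : ℝ, 0 < β ∧ β ≤ 1 ∧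
      ∀ u v : E d, u ∈ V → v ∈ V → v ≠ u → ∃ j ∈ R.act u, β ≤ R.q v j := by
  set T : Finset ℝ := ((V ×ˢ (Finset.univ : Finset (Fin m))).filter
    fun p : E d × Fin m => 0 < R.q p.1 p.2).image fun p => R.q p.1 p.2 with hT
  have hmemV : ∀ v ∈ V, v ∈ R.P := by
    intro v hv
    have : v ∈ vertices R.P := by rw [← hV]; exact hv
    exact this.1
  by_cases hTne : T.Nonempty
  · refine ⟨T.min' hTne, ?_, ?_, ?_⟩
    · obtain ⟨p, hp, hpe⟩ := Finset.mem_image.1 (T.min'_mem hTne)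
      rw [← hpe]
      exact (Finset.mem_filter.1 hp).2
    · obtain ⟨p, hp, hpe⟩ := Finset.mem_image.1 (T.min'_mem hTne)
      rw [← hpe]
      have hpV : p.1 ∈ V := (Finset.mem_product.1 (Finset.mem_filter.1 hp).1).1
      exact R.q_le_one hd (hmemV _ hpV) p.2
    · intro u v hu hv hne
      have huvert : u ∈ vertices R.P := by rw [← hV]; exact hu
      have hvvert : v ∈ vertices R.P := by rw [← hV]; exact hv
      obtain ⟨j, hj, hpos⟩ := R.exists_pos_q huvert hvvert hne
      refine ⟨j, hj, T.min'_le _ ?_⟩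
      exact Finset.mem_image.2 ⟨(v, j), Finset.mem_filter.2
        ⟨Finset.mem_product.2 ⟨hv, Finset.mem_univ _⟩, hpos⟩, rfl⟩
  · refine ⟨1, one_pos, le_refl _, ?_⟩
    intro u v hu hv hne
    have huvert : u ∈ vertices R.P := by rw [← hV]; exact hu
    have hvvert : v ∈ vertices R.P := by rw [← hV]; exact hv
    obtain ⟨j, hj, hpos⟩ := R.exists_pos_q huvert hvvert hne
    exact absurd ⟨_, Finset.mem_image.2 ⟨(v, j), Finset.mem_filter.2
      ⟨Finset.mem_product.2 ⟨hv, Finset.mem_univ _⟩, hpos⟩, rfl⟩⟩ hTne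

lemma gk_offdiag (hd : 0 < d) (V : Finset (E d)) (hV : (↑V : Set (E d)) = vertices R.P)
    {β : ℝ} (hβ0 : 0 < β) (hβ1 : β ≤ 1)
    (hβ : ∀ u v : E d, u ∈ V → v ∈ V → v ≠ u → ∃ j ∈ R.act u, β ≤ R.q v j)
    {u v : E d} (hu : u ∈ V) (hv : v ∈ V) (hne : v ≠ u) {k : ℕ} (hk : 1 ≤ k) :
    R.gk k u v ≤ (((m:ℝ) - 1 + (1-β)^2) / m)^(2*k) := by
  have huvert : u ∈ vertices R.P := by rw [← hV]; exact hu
  have hvvert : v ∈ vertices R.P := by rw [← hV]; exact hv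
  have hvP : v ∈ R.P := hvvert.1
  obtain ⟨j₀, hj₀, hβj⟩ := hβ u v hu hv hne
  have hm1 : 1 ≤ (m:ℝ) := by
    have : 0 < m := Fin.pos j₀
    exact_mod_cast this
  have hm0 : (0:ℝ) < m := by linarith
  have hc1 : 1 ≤ (R.act u).card := Finset.card_pos.2 ⟨j₀, hj₀⟩
  have hc0 : (0:ℝ) < (R.act u).card := by exact_mod_cast hc1
  have hcm : ((R.act u).card : ℝ) ≤ m := by
    have := Finset.card_le_card (Finset.subset_univ (R.act u))
    rw [Finset.card_univ, Fintype.card_fin] at this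
    exact_mod_cast this
  have hq1 : R.q v j₀ ≤ 1 := R.q_le_one hd hvP j₀
  set A := (1 - β)^(2*k) with hA
  set B := (1 - β)^2 with hB
  have h1β : 0 ≤ 1 - β := by linarith
  have hAB : A ≤ B := pow_le_pow_of_le_one h1β (by linarith) (by omega)
  have hB1 : B ≤ 1 := pow_le_one₀ h1β (by linarith)
  have hS : ∑ j ∈ R.act u, (1 - R.q v j)^(2*k) ≤ A + (((R.act u).card : ℝ) - 1) := by
    rw [← Finset.add_sum_erase _ _ hj₀]
    have ht1 : (1 - R.q v j₀)^(2*k) ≤ A :=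
      pow_le_pow_left₀ (by linarith) (by linarith) _
    have ht2 : ∑ j ∈ (R.act u).erase j₀, (1 - R.q v j)^(2*k) ≤
        (((R.act u).card : ℝ) - 1) := by
      have hb : ∀ j ∈ (R.act u).erase j₀, (1 - R.q v j)^(2*k) ≤ 1 := by
        intro j hj
        apply pow_le_one₀ (by linarith [R.q_le_one hd hvP j]) (by linarith [R.q_nonneg hvP j])
      calc ∑ j ∈ (R.act u).erase j₀, (1 - R.q v j)^(2*k)
          ≤ ((R.act u).erase j₀).card • (1:ℝ) := Finset.sum_le_card_nsmul _ _ _ hb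
        _ = (((R.act u).erase j₀).card : ℝ) := by rw [nsmul_eq_mul, mul_one]
        _ = (((R.act u).card : ℝ) - 1) := by
            rw [Finset.card_erase_of_mem hj₀]
            have : 1 ≤ (R.act u).card := hc1
            push_cast [Nat.cast_sub this]
            ring
    linarith
  have hinner : (∑ j ∈ R.act u, (1 - R.q v j)^(2*k)) / ((R.act u).card : ℝ) ≤
      ((m:ℝ) - 1 + B) / m := by
    have h1 : (∑ j ∈ R.act u, (1 - R.q v j)^(2*k)) / ((R.act u).card : ℝ) ≤
        (A + (((R.act u).card : ℝ) - 1)) / ((R.act u).card : ℝ) :=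
      div_le_div_of_nonneg_right hS hc0.le
    have h2 : (A + (((R.act u).card : ℝ) - 1)) / ((R.act u).card : ℝ) ≤
        ((m:ℝ) - 1 + B) / m := by
      rw [div_le_div_iff₀ hc0 hm0]
      have e1 : ((R.act u).card : ℝ) * (B - 1) ≥ (m:ℝ) * (B - 1) :=
        mul_le_mul_of_nonpos_right hcm (by linarith)
      have e2 : (m:ℝ) * (A - 1) ≤ (m:ℝ) * (B - 1) :=
        mul_le_mul_of_nonneg_left (by linarith) (by linarith)
      nlinarith
    linarith
  have hnn : 0 ≤ (∑ j ∈ R.act u, (1 - R.q v j)^(2*k)) / ((R.act u).card : ℝ) :=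
    div_nonneg (Finset.sum_nonneg fun j _ => (even_two_mul k).pow_nonneg _) hc0.le
  exact pow_le_pow_left₀ hnn hinner _

end FacetRep


namespace FacetRep
variable {d m : ℕ} (R : FacetRep d m)

lemma y_lower (hd : 0 < d) (V : Finset (E d)) (hV : (↑V : Set (E d)) = vertices R.P)
    {β : ℝ} (hβ0 : 0 < β) (hβ1 : β ≤ 1)
    (hβ : ∀ u v : E d, u ∈ V → v ∈ V → v ≠ u → ∃ j ∈ R.act u, β ≤ R.q v j)
    (y : ↥V → ℝ) (hy0 : ∀ v, 0 ≤ y v) {k : ℕ} (hk : 1 ≤ k)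
    (h1 : ∀ w : ↥V, R.fk V y k w.1 = 1) (v : ↥V) :
    1 - V.card * (((m:ℝ) - 1 + (1-β)^2) / m)^(2*k) ≤ y v := by
  set ρ := ((m:ℝ) - 1 + (1-β)^2) / m with hρ
  have hvvert : (v : E d) ∈ vertices R.P := by rw [← hV]; exact v.2
  have hfkv := h1 v
  rw [R.fk_eq] at hfkv
  rw [← Finset.add_sum_erase Finset.univ _ (Finset.mem_univ v)] at hfkv
  rw [R.gk_self hd k hvvert, mul_one] at hfkv
  have hbound : ∑ u ∈ Finset.univ.erase v, y u * R.gk k u.1 v.1 ≤ V.card * ρ^(2*k) := by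
    have hterm : ∀ u ∈ Finset.univ.erase v, y u * R.gk k u.1 v.1 ≤ ρ^(2*k) := by
      intro u hu
      have hneuv : (v : E d) ≠ (u : E d) := by
        intro h
        exact (Finset.ne_of_mem_erase hu) (Subtype.ext h.symm)
      have hg := R.gk_offdiag hd V hV hβ0 hβ1 hβ u.2 v.2 hneuv hk
      have hy1 := R.y_le_one hd V hV y hy0 k h1 u
      calc y u * R.gk k u.1 v.1 ≤ 1 * ρ^(2*k) :=
            mul_le_mul hy1 hg (R.gk_nonneg k u.1 v.1) zero_le_one
        _ = ρ^(2*k) := one_mul _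
    calc ∑ u ∈ Finset.univ.erase v, y u * R.gk k u.1 v.1
        ≤ (Finset.univ.erase v).card • ρ^(2*k) := Finset.sum_le_card_nsmul _ _ _ hterm
      _ = ((Finset.univ.erase v).card : ℝ) * ρ^(2*k) := nsmul_eq_mul _ _
      _ ≤ V.card * ρ^(2*k) := by
          apply mul_le_mul_of_nonneg_right _ ((even_two_mul k).pow_nonneg ρ)
          have h1 : (Finset.univ.erase v).card ≤ (Finset.univ : Finset ↥V).card :=
            Finset.card_le_card (Finset.erase_subset _ _)
          have h2 : (Finset.univ : Finset ↥V).card = V.card := by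
            rw [Finset.card_univ, Fintype.card_coe]
          exact_mod_cast h2 ▸ h1
  linarith

end FacetRep


namespace FacetRep
variable {d m : ℕ} (R : FacetRep d m)

lemma fk_big (hd : 0 < d) (V : Finset (E d)) (hV : (↑V : Set (E d)) = vertices R.P)
    (y : ↥V → ℝ) (hylb : ∀ v, 1/2 ≤ y v) {k : ℕ} (hk : 1 ≤ k)
    {ε' : ℝ} (hε' : 0 < ε') (hm2 : 2 * (m:ℝ) ≤ (1+ε')^(2*k))
    {x : E d} {j : Fin m} (hj : R.q x j ≤ -ε') : 2 ≤ R.fk V y k x := by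
  obtain ⟨v, hvvert, hqv⟩ := R.facet_has_vertex hd j
  have hvV : v ∈ V := by
    have : v ∈ (↑V : Set (E d)) := by rw [hV]; exact hvvert
    exact_mod_cast this
  have hjact : j ∈ R.act v := Finset.mem_filter.2 ⟨Finset.mem_univ _, hqv⟩
  have hm0 : (0:ℝ) < m := by exact_mod_cast Fin.pos j
  have hc1 : 1 ≤ (R.act v).card := Finset.card_pos.2 ⟨j, hjact⟩
  have hc0 : (0:ℝ) < (R.act v).card := by exact_mod_cast hc1
  have hcm : ((R.act v).card : ℝ) ≤ m := by
    have := Finset.card_le_card (Finset.subset_univ (R.act v))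
    rw [Finset.card_univ, Fintype.card_fin] at this
    exact_mod_cast this
  have hsum : (1+ε')^(2*k) ≤ ∑ j' ∈ R.act v, (1 - R.q x j')^(2*k) := by
    have h1 : (1+ε')^(2*k) ≤ (1 - R.q x j)^(2*k) :=
      pow_le_pow_left₀ (by linarith) (by linarith) _
    refine h1.trans (Finset.single_le_sum (f := fun j' => (1 - R.q x j')^(2*k))
      (fun j' _ => (even_two_mul k).pow_nonneg _) hjact)
  have hdiv : 2 ≤ (∑ j' ∈ R.act v, (1 - R.q x j')^(2*k)) / ((R.act v).card : ℝ) := by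
    have h2 : (1+ε')^(2*k) / (m:ℝ) ≤
        (∑ j' ∈ R.act v, (1 - R.q x j')^(2*k)) / ((R.act v).card : ℝ) := by
      apply div_le_div₀ (Finset.sum_nonneg fun j' _ => (even_two_mul k).pow_nonneg _)
        hsum hc0 hcm
    have h3 : 2 ≤ (1+ε')^(2*k) / (m:ℝ) := by
      rw [le_div_iff₀ hm0]
      linarith
    linarith
  have hg : 4 ≤ R.gk k v x := by
    have h4 : (2:ℝ)^(2*k) ≤ ((∑ j' ∈ R.act v, (1 - R.q x j')^(2*k)) /
        ((R.act v).card : ℝ))^(2*k) := pow_le_pow_left₀ (by norm_num) hdiv _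
    have h5 : (4:ℝ) ≤ 2^(2*k) := by
      calc (4:ℝ) = 2^2 := by norm_num
        _ ≤ 2^(2*k) := pow_le_pow_right₀ one_le_two (by omega)
    exact h5.trans h4
  have hfin : y ⟨v, hvV⟩ * R.gk k v x ≤ R.fk V y k x := by
    rw [R.fk_eq]
    exact Finset.single_le_sum (f := fun u : ↥V => y u * R.gk k u.1 x)
      (fun u _ => mul_nonneg (by linarith [hylb u]) (R.gk_nonneg k u.1 x))
      (Finset.mem_univ (⟨v, hvV⟩ : ↥V))
  have : (2:ℝ) = (1/2) * 4 := by norm_num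
  calc (2:ℝ) = (1/2) * 4 := by norm_num
    _ ≤ y ⟨v, hvV⟩ * R.gk k v x :=
        mul_le_mul (hylb _) hg (by norm_num) (by linarith [hylb (⟨v, hvV⟩ : ↥V)])
    _ ≤ R.fk V y k x := hfin

lemma near_P (hd : 0 < d) : ∃ C : ℝ, 0 < C ∧ ∀ ε' : ℝ, 0 < ε' → ∀ x : E d,
    (∀ j, -ε' ≤ R.q x j) → Metric.infDist x R.P ≤ C * ε' := by
  obtain ⟨z, r, hr, hball⟩ := R.exists_ball
  have hD : 0 < Metric.diam R.P := R.diam_pos hd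
  set D := Metric.diam R.P with hDdef
  set δ := r / (2 * D) with hδdef
  have hδ : 0 < δ := by positivity
  have hzP : z ∈ R.P := hball (Metric.mem_ball_self hr)
  have hqz : ∀ j, δ ≤ R.q z j := by
    intro j
    have hu1 : ‖R.u j‖ = 1 := (R.facet j).1
    have hp : z + (r/2) • R.u j ∈ R.P := by
      apply hball
      simp only [Metric.mem_ball, dist_eq_norm, add_sub_cancel_left, norm_smul,
        Real.norm_eq_abs, hu1, mul_one]
      rw [abs_of_pos (by linarith)]; linarith
    have h0 := R.q_nonneg hp j
    have : R.q (z + (r/2) • R.u j) j = R.q z j - (r/2) / D := by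
      show qf R.P (R.u j) _ = qf R.P (R.u j) z - (r/2)/D
      rw [qf, qf, inner_add_right, real_inner_smul_right, real_inner_self_eq_norm_sq, hu1]
      ring
    rw [this] at h0
    rw [hδdef]
    rw [sub_nonneg] at h0
    calc r / (2 * D) = (r/2) / D := by ring
      _ ≤ R.q z j := h0
  refine ⟨D / δ, by positivity, ?_⟩
  intro ε' hε' x hx
  set t := δ / (δ + ε') with htdef
  have hδε : 0 < δ + ε' := by linarith
  have ht0 : 0 < t := by positivity
  have ht1 : t ≤ 1 := by
    rw [htdef, div_le_one hδε]; linarith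
  set p := z + t • (x - z) with hpdef
  have hpP : p ∈ R.P := by
    rw [R.mem_iff]
    intro j
    have hcombo : R.q p j = (1 - t) * R.q z j + t * R.q x j := by
      show qf R.P (R.u j) p = _
      rw [hpdef, q_combo]
      rfl
    rw [hcombo]
    have h1 : (1 - t) * δ ≤ (1 - t) * R.q z j :=
      mul_le_mul_of_nonneg_left (hqz j) (by linarith)
    have h2 : t * (-ε') ≤ t * R.q x j := mul_le_mul_of_nonneg_left (hx j) ht0.le
    have h3 : (1 - t) * δ + t * (-ε') = 0 := by
      rw [htdef]
      field_simp
      ring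
    linarith
  have hxz : t * ‖x - z‖ ≤ D := by
    have : dist p z ≤ D := Metric.dist_le_diam_of_mem R.compact.isBounded hpP hzP
    rw [hpdef, dist_eq_norm, add_sub_cancel_left, norm_smul, Real.norm_eq_abs,
      abs_of_pos ht0] at this
    exact this
  have hdist : dist x p = (1 - t) * ‖x - z‖ := by
    rw [dist_eq_norm]
    have : x - p = (1 - t) • (x - z) := by rw [hpdef]; module
    rw [this, norm_smul, Real.norm_eq_abs, abs_of_nonneg (by linarith)]
  have hfinal : dist x p ≤ (D / δ) * ε' := by
    rw [hdist]
    have h1 : (1 - t) * ‖x - z‖ ≤ (1 - t) * (D / t) := by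
      apply mul_le_mul_of_nonneg_left _ (by linarith)
      rw [le_div_iff₀ ht0]
      linarith [hxz, mul_comm t ‖x - z‖]
    have h2 : (1 - t) * (D / t) = (D / δ) * ε' := by
      rw [htdef]
      field_simp
      ring
    linarith
  exact (Metric.infDist_le_dist_of_mem hpP).trans hfinal

end FacetRep



theorem statement8 (d m : ℕ) (hd : 2 ≤ d) (R : FacetRep d m)
    (V : Finset (E d)) (hV : (↑V : Set (E d)) = vertices R.P)
    (k₀ : ℕ) (y : ℕ → ↥V → ℝ)
    (hy : ∀ k ≥ k₀, (∀ v, 0 < y k v) ∧ ∀ w : ↥V, R.fk V (y k) k w.1 = 1) :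
    (∀ k ≥ k₀, R.P ⊆ {x : E d | R.fk V (y k) k x ≤ 1}) ∧
      Filter.Tendsto (fun k => Metric.hausdorffDist {x : E d | R.fk V (y k) k x ≤ 1} R.P)
        Filter.atTop (nhds 0) := by
  have hd0 : 0 < d := by omega
  have hpart1 : ∀ k ≥ k₀, R.P ⊆ {x : E d | R.fk V (y k) k x ≤ 1} := fun k hk =>
    R.subset_Sk V hV (y k) (fun v => ((hy k hk).1 v).le) k (hy k hk).2
  refine ⟨hpart1, ?_⟩
  obtain ⟨v₀, hv₀⟩ := R.compact.extremePoints_nonempty R.P_nonempty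
  have hv₀vert : v₀ ∈ vertices R.P := hv₀
  have hm0 : (0:ℝ) < m := by
    obtain ⟨j, _⟩ := R.act_nonempty hd0 hv₀vert
    exact_mod_cast Fin.pos j
  have hm1 : (1:ℝ) ≤ m := by exact_mod_cast (show 0 < m by exact_mod_cast hm0)
  obtain ⟨β, hβ0, hβ1, hβ⟩ := R.exists_beta hd0 V hV
  set ρ := ((m:ℝ) - 1 + (1-β)^2)/m with hρdef
  have hρ0 : 0 ≤ ρ := by
    apply div_nonneg _ hm0.le
    nlinarith [sq_nonneg (1-β)]
  have hρ1 : ρ < 1 := by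
    rw [hρdef, div_lt_one hm0]
    nlinarith
  obtain ⟨C, hC0, hC⟩ := R.near_P hd0
  rw [Metric.tendsto_atTop]
  intro ε hε
  set ε' := ε / (2 * C) with hε'def
  have hε'0 : 0 < ε' := by positivity
  have hsq : ρ^2 < 1 := pow_lt_one₀ hρ0 hρ1 (by norm_num)
  have htend1 : Filter.Tendsto (fun k : ℕ => (V.card : ℝ) * (ρ^2)^k)
      Filter.atTop (nhds 0) := by
    simpa using (tendsto_pow_atTop_nhds_zero_of_lt_one (by positivity) hsq).const_mul
      ((V.card : ℝ))
  have hev1 : ∀ᶠ k : ℕ in Filter.atTop, (V.card : ℝ) * ρ^(2*k) < 1/2 := by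
    filter_upwards [htend1.eventually (gt_mem_nhds (by norm_num : (0:ℝ) < 1/2))] with k hk
    rw [pow_mul]
    exact hk
  have htend2 : Filter.Tendsto (fun k : ℕ => ((1+ε')^2)^k) Filter.atTop Filter.atTop :=
    tendsto_pow_atTop_atTop_of_one_lt (by nlinarith)
  have hev2 : ∀ᶠ k : ℕ in Filter.atTop, 2*(m:ℝ) ≤ (1+ε')^(2*k) := by
    filter_upwards [htend2.eventually_ge_atTop (2*(m:ℝ))] with k hk
    rw [pow_mul]
    exact hk
  have hev3 : ∀ᶠ k : ℕ in Filter.atTop, k₀ ≤ k := Filter.eventually_ge_atTop k₀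
  have hev4 : ∀ᶠ k : ℕ in Filter.atTop, 1 ≤ k := Filter.eventually_ge_atTop 1
  obtain ⟨K, hK⟩ := Filter.eventually_atTop.1 (((hev1.and hev2).and (hev3.and hev4)))
  refine ⟨K, fun k hk => ?_⟩
  obtain ⟨⟨h1, h2⟩, h3, h4⟩ := hK k hk
  have hy' := hy k h3
  have hylb : ∀ v, (1:ℝ)/2 ≤ y k v := by
    intro v
    have := R.y_lower hd0 V hV hβ0 hβ1 hβ (y k) (fun v => (hy'.1 v).le) h4 hy'.2 v
    rw [← hρdef] at this
    linarith
  have hSsub : ∀ x ∈ {x : E d | R.fk V (y k) k x ≤ 1}, Metric.infDist x R.P ≤ ε/2 := by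
    intro x hx
    have hq : ∀ j, -ε' ≤ R.q x j := by
      intro j
      by_contra hcon
      push_neg at hcon
      have h2' := R.fk_big hd0 V hV (y k) hylb h4 hε'0 h2 hcon.le
      have hx1 : R.fk V (y k) k x ≤ 1 := hx
      linarith
    have hinf := hC ε' hε'0 x hq
    have hCε : C * ε' = ε/2 := by
      rw [hε'def]
      field_simp
    linarith
  have hPsub : ∀ p ∈ R.P, Metric.infDist p {x : E d | R.fk V (y k) k x ≤ 1} ≤ ε/2 := by
    intro p hp
    have hpS : p ∈ {x : E d | R.fk V (y k) k x ≤ 1} := hpart1 k h3 hp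
    have h0 := Metric.infDist_le_dist_of_mem (x := p) hpS
    rw [dist_self] at h0
    linarith
  have hHD := Metric.hausdorffDist_le_of_infDist (by positivity) hSsub hPsub
  rw [Real.dist_eq, sub_zero, abs_of_nonneg Metric.hausdorffDist_nonneg]
  linarith



end AverkovHenk
end
end

section
/- Let P be a convex d-polytope in E^d, and for sufficiently large k let y_{v,k} > 0 (v ∈ vert(P)) be the unique scalars with f_k(w) = 1 for all vertices w, where f_k(x) := Σ_{v ∈ vert(P)} y_{v,k} ((1/deg(v)) Σ_{F facet containing v} (1 − q_F(x))^{2k})^{2k}, and S_k := {x ∈ E^d : f_k(x) ≤ 1}. Then for all sufficiently large k and every vertex v of P, S_k ∩ C_v = {v}. -/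
noncomputable section

open Metric Set Finset Matrix
open scoped RealInnerProductSpace BigOperators Classical

namespace AverkovHenk

section Helpers

variable {d m : ℕ}

lemma diam_pos (hd : 1 ≤ d) (R : FacetRep d m) : 0 < Metric.diam R.P := by
  obtain ⟨x₀, hx₀⟩ := R.fulldim
  obtain ⟨ε, hε, hball⟩ := Metric.isOpen_iff.1 isOpen_interior x₀ hx₀
  have hsub : Metric.ball x₀ ε ⊆ R.P := hball.trans interior_subset
  haveI : NeZero d := ⟨by omega⟩
  set w : E d := EuclideanSpace.single (⟨0, by omega⟩ : Fin d) (1:ℝ) with hw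
  have hwn : ‖w‖ = 1 := by simp [hw]
  have h1 : x₀ + (ε/2) • w ∈ R.P := by
    apply hsub
    simp only [Metric.mem_ball, dist_self_add_left]
    rw [norm_smul, hwn]
    rw [Real.norm_eq_abs, abs_of_pos (by linarith : (0:ℝ) < ε/2)]
    linarith
  have h2 : x₀ ∈ R.P := hsub (Metric.mem_ball_self hε)
  have := Metric.dist_le_diam_of_mem R.compact.isBounded h2 h1
  rw [dist_self_add_right, norm_smul, hwn] at this
  have : ε/2 ≤ Metric.diam R.P := by
    rwa [Real.norm_eq_abs, abs_of_pos (by linarith : (0:ℝ) < ε/2), mul_one] at this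
  linarith

lemma q_inner (hd : 1 ≤ d) (R : FacetRep d m) (x v : E d) (j : Fin m) :
    ⟪R.u j, x - v⟫ = Metric.diam R.P * (R.q v j - R.q x j) := by
  have hD : Metric.diam R.P ≠ 0 := (diam_pos hd R).ne'
  simp only [FacetRep.q, qf, inner_sub_right]
  field_simp
  ring

lemma q_nonneg (R : FacetRep d m) {v : E d} (hv : v ∈ R.P) (j : Fin m) : 0 ≤ R.q v j := by
  have := R.rep ▸ hv
  exact this j

lemma q_le_one (hd : 1 ≤ d) (R : FacetRep d m) {v : E d} (hv : v ∈ R.P) (j : Fin m) :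
    R.q v j ≤ 1 := by
  have hD := diam_pos hd R
  have hcont : Continuous fun x : E d => ⟪R.u j, x⟫ := by
    exact Continuous.inner continuous_const continuous_id
  obtain ⟨z, hz, hzmax⟩ := R.compact.exists_isMaxOn ⟨v, hv⟩ hcont.continuousOn
  have hsupp : supp R.P (R.u j) = ⟪R.u j, z⟫ := by
    apply IsGreatest.csSup_eq
    exact ⟨⟨z, hz, rfl⟩, by rintro c ⟨x, hx, rfl⟩; exact hzmax hx⟩
  have hle : ⟪R.u j, z⟫ - ⟪R.u j, v⟫ ≤ Metric.diam R.P := by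
    have h1 : ⟪R.u j, z⟫ - ⟪R.u j, v⟫ = ⟪R.u j, z - v⟫ := by rw [inner_sub_right]
    rw [h1]
    calc ⟪R.u j, z - v⟫ ≤ ‖R.u j‖ * ‖z - v‖ := real_inner_le_norm _ _
      _ = dist z v := by rw [(R.facet j).1, one_mul, dist_eq_norm]
      _ ≤ Metric.diam R.P := Metric.dist_le_diam_of_mem R.compact.isBounded hz hv
  simp only [FacetRep.q, qf, hsupp]
  rw [div_le_one hD]
  linarith

lemma act_mem_iff (R : FacetRep d m) (v : E d) (j : Fin m) :
    j ∈ R.act v ↔ R.q v j = 0 := by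
  simp [FacetRep.act]

lemma vertex_normals (hd : 1 ≤ d) (R : FacetRep d m) {v : E d}
    (hv : v ∈ vertices R.P) {z : E d} (hz : ∀ j ∈ R.act v, ⟪R.u j, z⟫ = 0) : z = 0 := by
  by_contra hzne
  have hD := diam_pos hd R
  have hvP : v ∈ R.P := hv.1
  -- positive slack on inactive constraints
  set c : Fin m → ℝ := fun j => R.q v j with hc
  have hpos : ∀ j ∉ R.act v, 0 < c j := fun j hj => by
    have h0 := q_nonneg R hvP j
    have hne : R.q v j ≠ 0 := by
      intro h; exact hj ((act_mem_iff R v j).2 h)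
    exact lt_of_le_of_ne h0 (Ne.symm hne)
  set μ : ℝ := if h : ((Finset.univ : Finset (Fin m)) \ R.act v).Nonempty
      then ((Finset.univ : Finset (Fin m)) \ R.act v).inf' h c else 1 with hμ
  have hμpos : 0 < μ := by
    rw [hμ]; split
    · next h =>
        obtain ⟨j, hj, hjeq⟩ := Finset.exists_mem_eq_inf' h c
        rw [hjeq]
        exact hpos j (Finset.mem_sdiff.1 hj).2
    · norm_num
  have hμle : ∀ j ∉ R.act v, μ ≤ c j := by
    intro j hj
    have hmem : j ∈ (Finset.univ : Finset (Fin m)) \ R.act v :=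
      Finset.mem_sdiff.2 ⟨Finset.mem_univ j, hj⟩
    rw [hμ]
    rw [dif_pos ⟨j, hmem⟩]
    exact Finset.inf'_le c hmem
  set s : ℝ := Metric.diam R.P * μ / ‖z‖ with hs
  have hzn : 0 < ‖z‖ := norm_pos_iff.2 hzne
  have hspos : 0 < s := by positivity
  have hkey : ∀ (t : ℝ), |t| ≤ s → v + t • z ∈ R.P := by
    intro t ht
    rw [R.rep]
    intro j
    show 0 ≤ R.q (v + t • z) j
    have hq : R.q (v + t • z) j = R.q v j - t * ⟪R.u j, z⟫ / Metric.diam R.P := by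
      have := q_inner hd R (v + t • z) v j
      have h2 : ⟪R.u j, v + t • z - v⟫ = t * ⟪R.u j, z⟫ := by
        rw [add_sub_cancel_left, real_inner_smul_right]
      rw [h2] at this
      have hDne : Metric.diam R.P ≠ 0 := hD.ne'
      field_simp at this ⊢
      linarith
    rw [hq]
    by_cases hj : j ∈ R.act v
    · rw [(act_mem_iff R v j).1 hj, hz j hj]
      simp
    · have h1 : μ ≤ R.q v j := hμle j hj
      have h2 : |t * ⟪R.u j, z⟫| ≤ s * ‖z‖ := by
        rw [abs_mul]
        have := abs_real_inner_le_norm (R.u j) z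
        rw [(R.facet j).1, one_mul] at this
        exact mul_le_mul ht this (abs_nonneg _) hspos.le
      have h3 : s * ‖z‖ = Metric.diam R.P * μ := by
        rw [hs, div_mul_cancel₀ _ hzn.ne']
      have h4 : t * ⟪R.u j, z⟫ / Metric.diam R.P ≤ μ := by
        rw [div_le_iff₀ hD]
        calc t * ⟪R.u j, z⟫ ≤ |t * ⟪R.u j, z⟫| := le_abs_self _
          _ ≤ Metric.diam R.P * μ := h3 ▸ h2
          _ = μ * Metric.diam R.P := mul_comm _ _
      linarith
  have hp1 : v + s • z ∈ R.P := hkey s (by rw [abs_of_pos hspos])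
  have hp2 : v - s • z ∈ R.P := by
    have := hkey (-s) (by rw [abs_neg, abs_of_pos hspos])
    rwa [neg_smul, ← sub_eq_add_neg] at this
  have hseg : v ∈ openSegment ℝ (v - s • z) (v + s • z) := by
    refine ⟨1/2, 1/2, by norm_num, by norm_num, by norm_num, ?_⟩
    module
  have h1 : v - s • z = v := (hv.2 hp2 hp1 hseg)
  exact hzne ((smul_eq_zero.1 (sub_eq_self.mp h1)).resolve_left hspos.ne')

lemma exists_coercive (hd : 2 ≤ d) (R : FacetRep d m) {v : E d} (hv : v ∈ vertices R.P) :
    ∃ α : ℝ, 0 < α ∧ ∀ z : E d, ‖z‖ ≤ α * Real.sqrt (∑ j ∈ R.act v, (⟪R.u j, z⟫)^2) := by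
  haveI : NeZero d := ⟨by omega⟩
  set g : E d → ℝ := fun z => ∑ j ∈ R.act v, (⟪R.u j, z⟫)^2 with hg
  have hgc : Continuous g := by
    apply continuous_finset_sum
    intro j _
    exact (Continuous.inner continuous_const continuous_id).pow 2
  have hgnn : ∀ z, 0 ≤ g z := fun z => Finset.sum_nonneg fun j _ => sq_nonneg _
  have hsph : (Metric.sphere (0 : E d) 1).Nonempty := by
    apply NormedSpace.sphere_nonempty.2
    norm_num
  obtain ⟨z₀, hz₀, hmin⟩ := (isCompact_sphere (0 : E d) 1).exists_isMinOn hsph hgc.continuousOn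
  have hz₀n : ‖z₀‖ = 1 := by simpa using hz₀
  have hcpos : 0 < g z₀ := by
    rcases (hgnn z₀).lt_or_eq with h | h
    · exact h
    · exfalso
      have hall : ∀ j ∈ R.act v, ⟪R.u j, z₀⟫ = 0 := by
        intro j hj
        have := (Finset.sum_eq_zero_iff_of_nonneg (fun j _ => sq_nonneg (⟪R.u j, z₀⟫))).1 h.symm j hj
        exact pow_eq_zero_iff (n := 2) (by norm_num) |>.1 this
      have := vertex_normals (by omega) R hv hall
      rw [this] at hz₀n
      simp at hz₀n
  set c := g z₀ with hcdef
  refine ⟨1 / Real.sqrt c, by positivity, ?_⟩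
  intro z
  rcases eq_or_ne z 0 with rfl | hz
  · have h0 : ‖(0:E d)‖ = 0 := norm_zero
    rw [h0]
    positivity
  · have hzn : 0 < ‖z‖ := norm_pos_iff.2 hz
    have hmem : ‖z‖⁻¹ • z ∈ Metric.sphere (0 : E d) 1 := by
      simp [norm_smul, hzn.ne']
    have hge : c ≤ g (‖z‖⁻¹ • z) := hmin hmem
    have hgsc : g (‖z‖⁻¹ • z) = (‖z‖⁻¹)^2 * g z := by
      rw [hg]
      simp only [real_inner_smul_right]
      rw [Finset.mul_sum]
      congr 1
      ext j
      ring
    have h1 : c * ‖z‖^2 ≤ g z := by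
      rw [hgsc] at hge
      have h2 : (‖z‖⁻¹)^2 = (‖z‖^2)⁻¹ := by rw [inv_pow]
      rw [h2] at hge
      have h3 : (0:ℝ) < ‖z‖^2 := by positivity
      calc c * ‖z‖^2 ≤ ((‖z‖^2)⁻¹ * g z) * ‖z‖^2 := by
            apply mul_le_mul_of_nonneg_right hge h3.le
        _ = g z := by field_simp
    have h4 : ‖z‖ = Real.sqrt (‖z‖^2) := (Real.sqrt_sq hzn.le).symm
    rw [h4]
    have h5 : ‖z‖^2 ≤ g z / c := by
      rw [le_div_iff₀ hcpos]
      linarith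
    calc Real.sqrt (‖z‖^2) ≤ Real.sqrt (g z / c) := Real.sqrt_le_sqrt h5
      _ = Real.sqrt (g z) / Real.sqrt c := Real.sqrt_div (hgnn z) c
      _ = 1 / Real.sqrt c * Real.sqrt (g z) := by ring

lemma bern_even (a : ℝ) (k : ℕ) : 1 + (2*k : ℝ) * a ≤ (1+a)^(2*k) := by
  rcases le_or_gt (-2) a with h | h
  · exact_mod_cast one_add_mul_le_pow h (2*k)
  · have h1 : (1:ℝ) ≤ ((1+a)^2) := by nlinarith
    have h2 : (1:ℝ) ≤ ((1+a)^2)^k := one_le_pow₀ h1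
    rw [← pow_mul] at h2
    have h3 : (2*k:ℝ) * a ≤ 0 := by
      have : (0:ℝ) ≤ 2*k := by positivity
      nlinarith
    linarith

lemma pow_abs_sub_le {a b M : ℝ} (n : ℕ) (ha : |a| ≤ M) (hb : |b| ≤ M) :
    |a^n - b^n| ≤ n * M^(n-1) * |a - b| := by
  have hM : 0 ≤ M := le_trans (abs_nonneg a) ha
  rw [← geom_sum₂_mul a b n, abs_mul]
  have key : |∑ i ∈ Finset.range n, a ^ i * b ^ (n - 1 - i)| ≤ n * M^(n-1) := by
    calc |∑ i ∈ Finset.range n, a ^ i * b ^ (n - 1 - i)|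
        ≤ ∑ i ∈ Finset.range n, |a ^ i * b ^ (n - 1 - i)| := Finset.abs_sum_le_sum_abs _ _
      _ ≤ ∑ _i ∈ Finset.range n, M^(n-1) := by
          refine Finset.sum_le_sum fun i hi => ?_
          rw [abs_mul, abs_pow, abs_pow]
          have h1 : |a|^i * |b|^(n-1-i) ≤ M^i * M^(n-1-i) :=
            mul_le_mul (pow_le_pow_left₀ (abs_nonneg a) ha i)
              (pow_le_pow_left₀ (abs_nonneg b) hb _) (pow_nonneg (abs_nonneg b) _)
              (pow_nonneg hM i)
          have h2 : M^i * M^(n-1-i) = M^(n-1) := by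
            rw [← pow_add]
            congr 1
            have := Finset.mem_range.1 hi
            omega
          linarith
      _ = n * M^(n-1) := by simp [Finset.sum_const, nsmul_eq_mul]
  exact mul_le_mul_of_nonneg_right key (abs_nonneg _)

lemma pow_small (r c : ℝ) (h0 : 0 ≤ r) (h1 : r < 1) (hc : 0 < c) :
    ∃ K : ℕ, ∀ n ≥ K, r^n < c := by
  obtain ⟨K, hK⟩ := exists_pow_lt_of_lt_one hc h1
  exact ⟨K, fun n hn => lt_of_le_of_lt (pow_le_pow_of_le_one h0 h1.le hn) hK⟩

lemma act_nonempty (hd : 2 ≤ d) (R : FacetRep d m) {v : E d}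
    (hv : v ∈ vertices R.P) : (R.act v).Nonempty := by
  by_contra h
  rw [Finset.not_nonempty_iff_eq_empty] at h
  haveI : NeZero d := ⟨by omega⟩
  set z : E d := EuclideanSpace.single (⟨0, by omega⟩ : Fin d) (1:ℝ) with hz
  have h0 : z = 0 := vertex_normals (by omega) R hv (by rw [h]; intro j hj; simp at hj)
  have h1 : ‖z‖ = 1 := by simp [hz]
  rw [h0] at h1
  simp at h1

lemma exists_active_pos (hd : 2 ≤ d) (R : FacetRep d m) {v w : E d}
    (hv : v ∈ vertices R.P) (hw : w ∈ vertices R.P) (hne : v ≠ w) :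
    ∃ j ∈ R.act w, 0 < R.q v j := by
  by_contra hcon
  push_neg at hcon
  have hall : ∀ j ∈ R.act w, ⟪R.u j, v - w⟫ = 0 := by
    intro j hj
    have h1 : R.q v j = 0 :=
      le_antisymm (hcon j hj) (q_nonneg R hv.1 j)
    have h2 : R.q w j = 0 := (act_mem_iff R w j).1 hj
    rw [q_inner (by omega) R v w j, h1, h2]
    ring
  have := vertex_normals (by omega) R hw hall
  exact hne (by rwa [sub_eq_zero] at this)

end Helpers

set_option maxHeartbeats 8000000 in
theorem statement9 (d m : ℕ) (hd : 2 ≤ d) (R : FacetRep d m)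
    (V : Finset (E d)) (hV : (↑V : Set (E d)) = vertices R.P)
    (k₀ : ℕ) (y : ℕ → ↥V → ℝ)
    (hy : ∀ k ≥ k₀, (∀ v, 0 < y k v) ∧ ∀ w : ↥V, R.fk V (y k) k w.1 = 1) :
    ∃ k₁ : ℕ, ∀ k ≥ k₁, ∀ v ∈ V,
      {x : E d | R.fk V (y k) k x ≤ 1} ∩ R.Cv v = {v} := by
  classical
  by_cases hVne : V.Nonempty
  swap
  · exact ⟨0, fun k _ v hv => absurd ⟨v, hv⟩ hVne⟩
  have hvert : ∀ v ∈ V, v ∈ vertices R.P := by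
    intro v hv
    rw [← hV]
    exact Finset.mem_coe.2 hv
  have hvP : ∀ v ∈ V, v ∈ R.P := fun v hv => (hvert v hv).1
  obtain ⟨v₀, hv₀⟩ := hVne
  have hVne : V.Nonempty := ⟨v₀, hv₀⟩
  have hd1 : 1 ≤ d := by omega
  have hD := diam_pos hd1 R
  have hactne : ∀ v ∈ V, (R.act v).Nonempty := fun v hv => act_nonempty hd R (hvert v hv)
  have hcardm : ∀ v : E d, (R.act v).card ≤ m := by
    intro v
    calc (R.act v).card ≤ (Finset.univ : Finset (Fin m)).card := Finset.card_le_card (Finset.subset_univ _)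
      _ = m := by simp
  have hm1 : 1 ≤ m := le_trans ((hactne v₀ hv₀).card_pos) (hcardm v₀)
  -- the coercivity constant β
  have hαex : ∀ v ∈ V, ∃ α : ℝ, 0 < α ∧
      ∀ z : E d, ‖z‖ ≤ α * Real.sqrt (∑ j ∈ R.act v, (⟪R.u j, z⟫)^2) :=
    fun v hv => exists_coercive hd R (hvert v hv)
  set αf : E d → ℝ := fun v => if h : v ∈ V then (hαex v h).choose else 1 with hαf
  set β : ℝ := V.sup' hVne αf with hβdef
  have hαfprop : ∀ v ∈ V, 0 < αf v ∧
      ∀ z : E d, ‖z‖ ≤ αf v * Real.sqrt (∑ j ∈ R.act v, (⟪R.u j, z⟫)^2) := by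
    intro v hv
    have : αf v = (hαex v hv).choose := by rw [hαf]; simp [hv]
    rw [this]
    exact (hαex v hv).choose_spec
  have hβpos : 0 < β := lt_of_lt_of_le (hαfprop v₀ hv₀).1 (Finset.le_sup' αf hv₀)
  have hβ : ∀ v ∈ V, ∀ z : E d, ‖z‖ ≤ β * Real.sqrt (∑ j ∈ R.act v, (⟪R.u j, z⟫)^2) := by
    intro v hv z
    refine le_trans ((hαfprop v hv).2 z) ?_
    exact mul_le_mul_of_nonneg_right (Finset.le_sup' αf hv) (Real.sqrt_nonneg _)
  -- γ₀
  set Γ : Finset ℝ := ((V ×ˢ (Finset.univ : Finset (Fin m))).filter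
      (fun p => 0 < R.q p.1 p.2)).image (fun p => 1 - R.q p.1 p.2) with hΓ
  set γ₀ : ℝ := (insert (0:ℝ) Γ).max' (Finset.insert_nonempty _ _) with hγdef
  have hγ0 : 0 ≤ γ₀ := Finset.le_max' _ 0 (Finset.mem_insert_self _ _)
  have hγ1 : γ₀ < 1 := by
    rw [hγdef]
    apply Finset.max'_lt_iff _ _ |>.2
    intro b hb
    rcases Finset.mem_insert.1 hb with rfl | hb
    · norm_num
    · rw [hΓ] at hb
      obtain ⟨p, hp, rfl⟩ := Finset.mem_image.1 hb
      have := (Finset.mem_filter.1 hp).2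
      linarith
  have hγkey : ∀ v ∈ V, ∀ w ∈ V, v ≠ w →
      ∃ j ∈ R.act w, 0 ≤ 1 - R.q v j ∧ 1 - R.q v j ≤ γ₀ := by
    intro v hv w hw hne
    obtain ⟨j, hj, hjpos⟩ := exists_active_pos hd R (hvert v hv) (hvert w hw) hne
    refine ⟨j, hj, ?_, ?_⟩
    · have := q_le_one hd1 R (hvP v hv) j
      linarith
    · apply Finset.le_max'
      apply Finset.mem_insert_of_mem
      rw [hΓ]
      exact Finset.mem_image.2 ⟨(v, j), Finset.mem_filter.2
        ⟨Finset.mem_product.2 ⟨hv, Finset.mem_univ j⟩, hjpos⟩, rfl⟩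
  set N : ℕ := V.card with hN
  have hN1 : 1 ≤ N := Finset.card_pos.2 hVne
  set r₂ : ℝ := 1 - 1/(2*m) with hr₂
  have hr₂0 : 0 ≤ r₂ := by
    rw [hr₂]
    have : (1:ℝ) ≤ m := by exact_mod_cast hm1
    have : 1/(2*(m:ℝ)) ≤ 1/2 := by
      apply div_le_div_of_nonneg_left <;> linarith
    linarith
  have hr₂1 : r₂ < 1 := by
    rw [hr₂]
    have : (0:ℝ) < m := by exact_mod_cast hm1
    have : 0 < 1/(2*(m:ℝ)) := by positivity
    linarith
  obtain ⟨Ka, hKa⟩ := pow_small γ₀ (1/2) hγ0 hγ1 (by norm_num)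
  have hN0 : (0:ℝ) < N := by exact_mod_cast hN1
  obtain ⟨Kb, hKb⟩ := pow_small r₂ (1/(2*N)) hr₂0 hr₂1 (by positivity)
  have hm0 : (0:ℝ) < m := by exact_mod_cast hm1
  set c₃ : ℝ := (4/(3*m)) / (12*N*β+1) with hc₃
  have hc₃pos : 0 < c₃ := by
    rw [hc₃]
    have : (0:ℝ) < 12*N*β+1 := by positivity
    positivity
  obtain ⟨Kc, hKc⟩ := pow_small r₂ c₃ hr₂0 hr₂1 hc₃pos
  set Kd : ℕ := Nat.ceil (β*m) + 1 with hKd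
  refine ⟨max k₀ (max Ka (max Kb (max (Kc+1) (max Kd 1)))), ?_⟩
  intro k hk v hvV
  have hkk0 : k₀ ≤ k := le_trans (le_max_left _ _) hk
  have hkKa : Ka ≤ k := le_trans (le_trans (le_max_left _ _) (le_max_right _ _)) hk
  have hkKb : Kb ≤ k :=
    le_trans (le_trans (le_trans (le_max_left _ _) (le_max_right _ _)) (le_max_right _ _)) hk
  have hkKc : Kc + 1 ≤ k :=
    le_trans (le_trans (le_trans (le_trans (le_max_left _ _) (le_max_right _ _)) (le_max_right _ _)) (le_max_right _ _)) hk
  have hkKd : Kd ≤ k :=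
    le_trans (le_trans (le_trans (le_trans (le_trans (le_max_left _ _) (le_max_right _ _)) (le_max_right _ _)) (le_max_right _ _)) (le_max_right _ _)) hk
  have hk1 : 1 ≤ k :=
    le_trans (le_trans (le_trans (le_trans (le_trans (le_max_right _ _) (le_max_right _ _)) (le_max_right _ _)) (le_max_right _ _)) (le_max_right _ _)) hk
  have hka : γ₀^(2*k) < 1/2 := hKa (2*k) (by omega)
  have hkb : r₂^(2*k) < 1/(2*N) := hKb (2*k) (by omega)
  have hkc : r₂^(2*k-1) < c₃ := hKc (2*k-1) (by omega)
  have hβm : β * m ≤ k := by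
    calc β * m ≤ (Nat.ceil (β*m) : ℝ) := Nat.le_ceil _
      _ ≤ (Kd : ℝ) := by rw [hKd]; push_cast; linarith
      _ ≤ (k : ℝ) := by exact_mod_cast hkKd
  -- now works at fixed k and v
  obtain ⟨hy_pos, hy_one⟩ := hy k hkk0
  set vv : ↥V := ⟨v, hvV⟩ with hvv
  set T : ↥V → E d → ℝ := fun w x =>
    ((∑ j ∈ R.act w.1, (1 - R.q x j)^(2*k)) / ((R.act w.1).card : ℝ))^(2*k) with hT
  have hfk : ∀ x, R.fk V (y k) k x = ∑ w : ↥V, y k w * T w x := fun x => rfl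
  have hT0 : ∀ (w : ↥V) (x : E d), 0 ≤ T w x := by
    intro w x
    apply pow_nonneg
    apply div_nonneg _ (Nat.cast_nonneg _)
    exact Finset.sum_nonneg fun j _ => (even_two_mul k).pow_nonneg _
  have hT1 : ∀ w : ↥V, T w w.1 = 1 := by
    intro w
    rw [hT]
    have hcard : ((R.act w.1).card : ℝ) ≠ 0 := by
      have := (hactne w.1 w.2).card_pos
      positivity
    have hsum : (∑ j ∈ R.act w.1, (1 - R.q w.1 j)^(2*k)) = (R.act w.1).card := by
      have hone : ∀ j ∈ R.act w.1, (1 - R.q w.1 j)^(2*k) = 1 := fun j hj => by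
        rw [(act_mem_iff R w.1 j).1 hj]; norm_num
      rw [Finset.sum_congr rfl hone]
      simp
    simp only [hsum, div_self hcard, one_pow]
  have hq01 : ∀ w ∈ V, ∀ j, 0 ≤ R.q w j ∧ R.q w j ≤ 1 :=
    fun w hw j => ⟨q_nonneg R (hvP w hw) j, q_le_one hd1 R (hvP w hw) j⟩
  have hAle : ∀ v' ∈ V, ∀ w ∈ V, v' ≠ w →
      (∑ j ∈ R.act w, (1 - R.q v' j)^(2*k)) / ((R.act w).card : ℝ) ≤ r₂ := by
    intro v' hv' w hw hne
    obtain ⟨j₀, hj₀, hj₀0, hj₀γ⟩ := hγkey v' hv' w hw hne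
    have hn0 : (0:ℝ) < (R.act w).card := by exact_mod_cast (hactne w hw).card_pos
    have hnm : ((R.act w).card : ℝ) ≤ m := by exact_mod_cast hcardm w
    have hS : (∑ j ∈ R.act w, (1 - R.q v' j)^(2*k)) ≤ ((R.act w).card - 1) + γ₀^(2*k) := by
      rw [← Finset.add_sum_erase _ _ hj₀]
      have h1 : (1 - R.q v' j₀)^(2*k) ≤ γ₀^(2*k) := pow_le_pow_left₀ hj₀0 hj₀γ _
      have h2 : ∑ j ∈ (R.act w).erase j₀, (1 - R.q v' j)^(2*k) ≤ ((R.act w).card - 1 : ℝ) := by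
        have := Finset.sum_le_card_nsmul ((R.act w).erase j₀)
          (fun j => (1 - R.q v' j)^(2*k)) 1 (fun j _ => by
            have := hq01 v' hv' j
            exact pow_le_one₀ (by linarith [this.2]) (by linarith [this.1]))
        rw [Finset.card_erase_of_mem hj₀, nsmul_eq_mul, mul_one] at this
        calc ∑ j ∈ (R.act w).erase j₀, (1 - R.q v' j)^(2*k)
            ≤ (((R.act w).card - 1 : ℕ) : ℝ) := this
          _ = ((R.act w).card : ℝ) - 1 := by
              have := (hactne w hw).card_pos
              push_cast [Nat.cast_sub (by omega : 1 ≤ (R.act w).card)]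
              ring
      linarith
    rw [div_le_iff₀ hn0]
    have hγk : γ₀^(2*k) ≤ 1/2 := hka.le
    rw [hr₂]
    have h2m : (0:ℝ) < 2*m := by positivity
    have hdiv : ((R.act w).card : ℝ)/(2*m) ≤ 1/2 := by
      rw [div_le_iff₀ h2m]; linarith
    have hid : (1 - 1/(2*(m:ℝ))) * ((R.act w).card : ℝ)
        = ((R.act w).card : ℝ) - ((R.act w).card : ℝ)/(2*m) := by
      field_simp
    linarith
  have hy_le1 : ∀ w : ↥V, y k w ≤ 1 := by
    intro w
    have h1 := hy_one w
    rw [hfk w.1] at h1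
    have h2 : y k w * T w w.1 ≤ ∑ w' : ↥V, y k w' * T w' w.1 :=
      Finset.single_le_sum (fun w' _ => mul_nonneg (hy_pos w').le (hT0 w' w.1))
        (Finset.mem_univ w)
    rw [hT1 w, mul_one] at h2
    linarith
  have hyv : 1/2 ≤ y k vv := by
    have h1 := hy_one vv
    rw [hfk] at h1
    rw [← Finset.add_sum_erase _ _ (Finset.mem_univ vv)] at h1
    have h2 : ∑ w ∈ Finset.univ.erase vv, y k w * T w v ≤ 1/2 := by
      have hterm : ∀ w ∈ Finset.univ.erase vv, y k w * T w v ≤ r₂^(2*k) := by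
        intro w hw
        have hwne : w.1 ≠ v := by
          intro h
          exact (Finset.mem_erase.1 hw).1 (Subtype.ext h)
        have hTle : T w v ≤ r₂^(2*k) :=
          pow_le_pow_left₀ (div_nonneg (Finset.sum_nonneg fun j _ =>
            (even_two_mul k).pow_nonneg _) (Nat.cast_nonneg _))
            (hAle v hvV w.1 w.2 (fun h => hwne h.symm)) _
        calc y k w * T w v ≤ 1 * T w v :=
              mul_le_mul_of_nonneg_right (hy_le1 w) (hT0 w v)
          _ = T w v := one_mul _
          _ ≤ r₂^(2*k) := hTle
      calc ∑ w ∈ Finset.univ.erase vv, y k w * T w v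
          ≤ ∑ _w ∈ Finset.univ.erase vv, r₂^(2*k) := Finset.sum_le_sum hterm
        _ = (Finset.univ.erase vv).card * r₂^(2*k) := by
            rw [Finset.sum_const, nsmul_eq_mul]
        _ ≤ N * r₂^(2*k) := by
            apply mul_le_mul_of_nonneg_right _ (pow_nonneg hr₂0 _)
            have h3 : (Finset.univ.erase vv).card ≤ Fintype.card ↥V := by
              calc (Finset.univ.erase vv).card ≤ Finset.univ.card := Finset.card_erase_le
                _ = Fintype.card ↥V := rfl
            have h4 : Fintype.card ↥V = N := Fintype.card_coe V
            exact_mod_cast h3.trans h4.le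
        _ ≤ N * (1/(2*N)) := mul_le_mul_of_nonneg_left hkb.le hN0.le
        _ = 1/2 := by
            field_simp
    have h3 : T vv vv.1 = 1 := hT1 vv
    have h4 : vv.1 = v := rfl
    rw [h4] at h3
    rw [h3, mul_one] at h1
    linarith
  have hqv0 : ∀ j ∈ R.act v, R.q v j = 0 := fun j hj => (act_mem_iff R v j).1 hj
  have hvvv : (vv : E d) = v := rfl
  have hCvv : v ∈ R.Cv v := by
    show (2/3) * Real.sqrt (∑ j ∈ R.act v, (R.q v j)^2) ≤ -(∑ j ∈ R.act v, R.q v j)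
    have h1 : ∑ j ∈ R.act v, (R.q v j)^2 = 0 :=
      Finset.sum_eq_zero fun j hj => by rw [hqv0 j hj]; norm_num
    have h2 : ∑ j ∈ R.act v, R.q v j = 0 := Finset.sum_eq_zero hqv0
    rw [h1, h2, Real.sqrt_zero]
    norm_num
  apply Set.eq_singleton_iff_unique_mem.2
  constructor
  · exact ⟨le_of_eq (hy_one vv), hCvv⟩
  intro x hx
  obtain ⟨hfx', hCx'⟩ := hx
  have hfx : R.fk V (y k) k x ≤ 1 := hfx'
  have hσ' : (2/3) * Real.sqrt (∑ j ∈ R.act v, (R.q x j)^2) ≤ -(∑ j ∈ R.act v, R.q x j) := hCx'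
  by_contra hxv
  set t : ℝ := Real.sqrt (∑ j ∈ R.act v, (R.q x j)^2) with htdef
  have ht0 : 0 ≤ t := Real.sqrt_nonneg _
  have hsq0 : 0 ≤ ∑ j ∈ R.act v, (R.q x j)^2 := Finset.sum_nonneg fun j _ => sq_nonneg _
  have htpos : 0 < t := by
    rcases ht0.lt_or_eq with h | h
    · exact h
    · exfalso
      have hsum0 : ∑ j ∈ R.act v, (R.q x j)^2 = 0 := (Real.sqrt_eq_zero hsq0).1 h.symm
      have hq0 : ∀ j ∈ R.act v, R.q x j = 0 := by
        intro j hj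
        have := (Finset.sum_eq_zero_iff_of_nonneg (fun j _ => sq_nonneg (R.q x j))).1 hsum0 j hj
        exact pow_eq_zero_iff (n := 2) (by norm_num) |>.1 this
      have hinner : ∀ j ∈ R.act v, ⟪R.u j, x - v⟫ = 0 := fun j hj => by
        rw [q_inner hd1 R x v j, hqv0 j hj, hq0 j hj]; ring
      have := vertex_normals hd1 R (hvert v hvV) hinner
      exact hxv (by rwa [sub_eq_zero] at this)
  set n : ℝ := ((R.act v).card : ℝ) with hn
  have hn1 : (1:ℝ) ≤ n := by
    rw [hn]; exact_mod_cast (hactne v hvV).card_pos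
  have hnm : n ≤ m := by rw [hn]; exact_mod_cast hcardm v
  have hn0 : (0:ℝ) < n := by linarith
  have hkR : (1:ℝ) ≤ (k:ℝ) := by exact_mod_cast hk1
  -- gain part
  have hSb : n + (4*(k:ℝ)/3)*t ≤ ∑ j ∈ R.act v, (1 - R.q x j)^(2*k) := by
    have hper : ∀ j ∈ R.act v, 1 + (2*(k:ℝ))*(-(R.q x j)) ≤ (1 - R.q x j)^(2*k) := by
      intro j _
      have h := bern_even (-(R.q x j)) k
      have heq : (1:ℝ) + -(R.q x j) = 1 - R.q x j := by ring
      rw [heq] at h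
      exact h
    have h1 : ∑ j ∈ R.act v, (1 + (2*(k:ℝ))*(-(R.q x j)))
        ≤ ∑ j ∈ R.act v, (1 - R.q x j)^(2*k) := Finset.sum_le_sum hper
    have h2 : ∑ j ∈ R.act v, (1 + (2*(k:ℝ))*(-(R.q x j)))
        = n + (2*(k:ℝ))*(-(∑ j ∈ R.act v, R.q x j)) := by
      rw [Finset.sum_add_distrib, Finset.sum_const, ← Finset.mul_sum, ← Finset.sum_neg_distrib]
      rw [nsmul_eq_mul, mul_one, hn]
    have h3 : (2*(k:ℝ))*((2/3)*t) ≤ (2*(k:ℝ))*(-(∑ j ∈ R.act v, R.q x j)) :=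
      mul_le_mul_of_nonneg_left hσ' (by positivity)
    have h4 : (2*(k:ℝ))*((2/3)*t) = (4*(k:ℝ)/3)*t := by ring
    linarith
  have hTvx : 1 + (8*(k:ℝ)^2/(3*m))*t ≤ T vv x := by
    have hbase : 1 + (4*(k:ℝ)/(3*n))*t ≤ (∑ j ∈ R.act v, (1 - R.q x j)^(2*k)) / n := by
      rw [le_div_iff₀ hn0]
      have heq : (1 + (4*(k:ℝ)/(3*n))*t) * n = n + (4*(k:ℝ)/3)*t := by
        field_simp
      rw [heq]
      exact hSb
    have ha0 : (0:ℝ) ≤ (4*(k:ℝ)/(3*n))*t :=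
      mul_nonneg (div_nonneg (by positivity) (by linarith)) ht0
    have hTeq : T vv x = ((∑ j ∈ R.act v, (1 - R.q x j)^(2*k)) / n)^(2*k) := by
      simp only [hT, hvvv]
      rfl
    calc 1 + (8*(k:ℝ)^2/(3*m))*t
        ≤ 1 + (2*(k:ℝ))*((4*(k:ℝ)/(3*n))*t) := by
          have h1 : (8*(k:ℝ)^2/(3*m))*t ≤ (2*(k:ℝ))*((4*(k:ℝ)/(3*n))*t) := by
            rw [show (2*(k:ℝ))*((4*(k:ℝ)/(3*n))*t) = (8*(k:ℝ)^2/(3*n))*t by ring]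
            apply mul_le_mul_of_nonneg_right _ ht0
            apply div_le_div_of_nonneg_left (by positivity) (by linarith) (by linarith)
          linarith
      _ ≤ (1 + (4*(k:ℝ)/(3*n))*t)^(2*k) := bern_even _ k
      _ ≤ ((∑ j ∈ R.act v, (1 - R.q x j)^(2*k)) / n)^(2*k) :=
          pow_le_pow_left₀ (by linarith) hbase _
      _ = T vv x := hTeq.symm
  have hfxge : 1/2 * (1 + (8*(k:ℝ)^2/(3*m))*t) ≤ R.fk V (y k) k x := by
    rw [hfk x]
    have h1 : y k vv * T vv x ≤ ∑ w : ↥V, y k w * T w x :=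
      Finset.single_le_sum (fun w _ => mul_nonneg (hy_pos w).le (hT0 w x)) (Finset.mem_univ vv)
    have h2 : 1/2 * (1 + (8*(k:ℝ)^2/(3*m))*t) ≤ y k vv * T vv x :=
      mul_le_mul hyv hTvx (by positivity) (hy_pos vv).le
    linarith
  have hts : t ≤ 3*m/(8*(k:ℝ)^2) := by
    have h1 : 1/2 * (1 + (8*(k:ℝ)^2/(3*m))*t) ≤ 1 := le_trans hfxge hfx
    have h2 : (8*(k:ℝ)^2/(3*m))*t ≤ 1 := by linarith
    have h3 : (0:ℝ) < 8*(k:ℝ)^2/(3*m) := by positivity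
    have h4 : t ≤ 1 / (8*(k:ℝ)^2/(3*m)) := by
      rw [le_div_iff₀ h3, mul_comm]
      exact h2
    rwa [one_div_div] at h4
  set s : ℝ := β * t with hs
  have hs0 : (0:ℝ) ≤ s := mul_nonneg hβpos.le ht0
  have hss : s ≤ 3*β*m/(8*(k:ℝ)^2) := by
    rw [hs]
    calc β*t ≤ β*(3*m/(8*(k:ℝ)^2)) := mul_le_mul_of_nonneg_left hts hβpos.le
      _ = 3*β*m/(8*(k:ℝ)^2) := by ring
  have hqd : ∀ j, |R.q x j - R.q v j| ≤ s := by
    have hxv2 : ‖x - v‖ ≤ β * (Metric.diam R.P * t) := by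
      have h1 := hβ v hvV (x - v)
      have h2 : ∑ j ∈ R.act v, (⟪R.u j, x - v⟫)^2
          = (Metric.diam R.P)^2 * ∑ j ∈ R.act v, (R.q x j)^2 := by
        rw [Finset.mul_sum]
        apply Finset.sum_congr rfl
        intro j hj
        rw [q_inner hd1 R x v j, hqv0 j hj]
        ring
      rw [h2, Real.sqrt_mul (sq_nonneg _), Real.sqrt_sq hD.le] at h1
      exact h1
    intro j
    have h3 : |⟪R.u j, x - v⟫| ≤ β * (Metric.diam R.P * t) := by
      calc |⟪R.u j, x - v⟫| ≤ ‖R.u j‖ * ‖x - v‖ := abs_real_inner_le_norm _ _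
        _ = ‖x - v‖ := by rw [(R.facet j).1, one_mul]
        _ ≤ _ := hxv2
    rw [q_inner hd1 R x v j, abs_mul, abs_of_pos hD] at h3
    have h6 : Metric.diam R.P * |R.q v j - R.q x j| ≤ Metric.diam R.P * (β * t) := by
      calc Metric.diam R.P * |R.q v j - R.q x j| ≤ β * (Metric.diam R.P * t) := h3
        _ = Metric.diam R.P * (β*t) := by ring
    rw [abs_sub_comm, hs]
    exact le_of_mul_le_mul_left h6 hD
  have h1s : (1:ℝ) ≤ 1 + s := by linarith
  have hexp3 : (1+s)^(2*k) ≤ 3 := by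
    have h1 : (1+s)^(2*k) ≤ (Real.exp s)^(2*k) :=
      pow_le_pow_left₀ (by linarith) (by linarith [Real.add_one_le_exp s]) _
    have h2 : (Real.exp s)^(2*k) = Real.exp ((2*k:ℕ)*s) := (Real.exp_nat_mul s (2*k)).symm
    have h3 : ((2*k:ℕ):ℝ)*s ≤ 1 := by
      have hb1 : ((2*k:ℕ):ℝ)*s ≤ (2*(k:ℝ))*(3*β*m/(8*(k:ℝ)^2)) := by
        push_cast
        exact mul_le_mul_of_nonneg_left hss (by positivity)
      have hb2 : (2*(k:ℝ))*(3*β*m/(8*(k:ℝ)^2)) = 3*(β*m)/(4*(k:ℝ)) := by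
        field_simp
        ring
      have hb3 : 3*(β*m)/(4*(k:ℝ)) ≤ 3*(k:ℝ)/(4*(k:ℝ)) := by
        gcongr
      have hb4 : 3*(k:ℝ)/(4*(k:ℝ)) = 3/4 := by
        field_simp
      linarith
    calc (1+s)^(2*k) ≤ Real.exp ((2*k:ℕ)*s) := h2 ▸ h1
      _ ≤ Real.exp 1 := Real.exp_le_exp.2 h3
      _ ≤ 3 := by have := Real.exp_one_lt_d9; linarith
  have hpow31 : (1+s)^(2*k-1) ≤ 3 := by
    calc (1+s)^(2*k-1) ≤ (1+s)^(2*k) := pow_le_pow_right₀ h1s (by omega)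
      _ ≤ 3 := hexp3
  set L : ℝ := 12*(k:ℝ)^2*s*r₂^(2*k-1) with hL
  have hL0 : (0:ℝ) ≤ L :=
    mul_nonneg (mul_nonneg (by positivity) hs0) (pow_nonneg hr₂0 _)
  have hloss : ∀ w : ↥V, w.1 ≠ v → y k w * T w v - L ≤ y k w * T w x := by
    intro w hwne
    set nw : ℝ := ((R.act w.1).card : ℝ) with hnw
    have hnw0 : (0:ℝ) < nw := by
      rw [hnw]; exact_mod_cast (hactne w.1 w.2).card_pos
    set A : ℝ := (∑ j ∈ R.act w.1, (1 - R.q v j)^(2*k)) / nw with hA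
    set B : ℝ := (∑ j ∈ R.act w.1, (1 - R.q x j)^(2*k)) / nw with hB
    have hTwv : T w v = A^(2*k) := by
      simp only [hT]
      rfl
    have hTwx : T w x = B^(2*k) := by
      simp only [hT]
      rfl
    have hA0 : (0:ℝ) ≤ A :=
      div_nonneg (Finset.sum_nonneg fun j _ => (even_two_mul k).pow_nonneg _) hnw0.le
    have hB0 : (0:ℝ) ≤ B :=
      div_nonneg (Finset.sum_nonneg fun j _ => (even_two_mul k).pow_nonneg _) hnw0.le
    have hABle : |A - B| ≤ 6*(k:ℝ)*s := by
      have hper : ∀ j ∈ R.act w.1,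
          |(1 - R.q v j)^(2*k) - (1 - R.q x j)^(2*k)| ≤ (2*(k:ℝ))*((1+s)^(2*k-1))*s := by
        intro j _
        have hq := hq01 v hvV j
        have ha : |1 - R.q v j| ≤ 1 + s := by
          rw [abs_le]; constructor <;> linarith [hq.1, hq.2, hs0]
        have hdj := hqd j
        have hb : |1 - R.q x j| ≤ 1 + s := by
          rw [abs_le] at hdj ⊢
          constructor <;> linarith [hq.1, hq.2, hdj.1, hdj.2]
        have hkey := pow_abs_sub_le (2*k) ha hb
        have habeq : (1 - R.q v j) - (1 - R.q x j) = R.q x j - R.q v j := by ring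
        rw [habeq] at hkey
        calc |(1 - R.q v j)^(2*k) - (1 - R.q x j)^(2*k)|
            ≤ (2*k : ℕ) * (1+s)^(2*k-1) * |R.q x j - R.q v j| := hkey
          _ ≤ (2*k : ℕ) * (1+s)^(2*k-1) * s := by
              apply mul_le_mul_of_nonneg_left (hqd j)
              have : (0:ℝ) ≤ (1+s)^(2*k-1) := by positivity
              positivity
          _ = (2*(k:ℝ))*((1+s)^(2*k-1))*s := by push_cast; ring
      have hsumd : |∑ j ∈ R.act w.1, ((1 - R.q v j)^(2*k) - (1 - R.q x j)^(2*k))|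
          ≤ nw * ((2*(k:ℝ))*((1+s)^(2*k-1))*s) := by
        calc |∑ j ∈ R.act w.1, ((1 - R.q v j)^(2*k) - (1 - R.q x j)^(2*k))|
            ≤ ∑ j ∈ R.act w.1, |(1 - R.q v j)^(2*k) - (1 - R.q x j)^(2*k)| :=
              Finset.abs_sum_le_sum_abs _ _
          _ ≤ (R.act w.1).card • ((2*(k:ℝ))*((1+s)^(2*k-1))*s) :=
              Finset.sum_le_card_nsmul _ _ _ hper
          _ = nw * ((2*(k:ℝ))*((1+s)^(2*k-1))*s) := by
              rw [nsmul_eq_mul, hnw]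
      have hABeq : A - B = (∑ j ∈ R.act w.1,
          ((1 - R.q v j)^(2*k) - (1 - R.q x j)^(2*k))) / nw := by
        rw [hA, hB, div_sub_div_same, ← Finset.sum_sub_distrib]
      have h7 : |A - B| ≤ (2*(k:ℝ))*((1+s)^(2*k-1))*s := by
        rw [hABeq, abs_div, abs_of_pos hnw0, div_le_iff₀ hnw0]
        calc |∑ j ∈ R.act w.1, ((1 - R.q v j)^(2*k) - (1 - R.q x j)^(2*k))|
            ≤ nw * ((2*(k:ℝ))*((1+s)^(2*k-1))*s) := hsumd
          _ = (2*(k:ℝ))*((1+s)^(2*k-1))*s * nw := by ring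
      have h8 : (2*(k:ℝ))*((1+s)^(2*k-1))*s ≤ (2*(k:ℝ))*3*s := by
        have := mul_le_mul_of_nonneg_left hpow31 (by positivity : (0:ℝ) ≤ 2*(k:ℝ))
        apply mul_le_mul_of_nonneg_right _ hs0
        linarith
      calc |A - B| ≤ (2*(k:ℝ))*((1+s)^(2*k-1))*s := h7
        _ ≤ (2*(k:ℝ))*3*s := h8
        _ = 6*(k:ℝ)*s := by ring
    rcases le_or_gt A B with hAB | hAB
    · have hTle : T w v ≤ T w x := by
        rw [hTwv, hTwx]
        exact pow_le_pow_left₀ hA0 hAB _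
      have := mul_le_mul_of_nonneg_left hTle (hy_pos w).le
      linarith
    · have hAr : A ≤ r₂ := hAle v hvV w.1 w.2 (fun h => hwne h.symm)
      have hBr : B ≤ r₂ := le_trans hAB.le hAr
      have habs : |A^(2*k) - B^(2*k)| ≤ (2*k:ℕ)*r₂^(2*k-1)*|A - B| :=
        pow_abs_sub_le (2*k) (by rwa [abs_of_nonneg hA0]) (by rwa [abs_of_nonneg hB0])
      have hdiff : A^(2*k) - B^(2*k) ≤ L := by
        calc A^(2*k) - B^(2*k) ≤ |A^(2*k) - B^(2*k)| := le_abs_self _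
          _ ≤ (2*k:ℕ)*r₂^(2*k-1)*|A - B| := habs
          _ ≤ (2*k:ℕ)*r₂^(2*k-1)*(6*(k:ℝ)*s) := by
              apply mul_le_mul_of_nonneg_left hABle
              exact mul_nonneg (by positivity) (pow_nonneg hr₂0 _)
          _ = 12*(k:ℝ)^2*s*r₂^(2*k-1) := by push_cast; ring
          _ = L := by rw [hL]
      have h9 := mul_le_mul_of_nonneg_left hdiff (hy_pos w).le
      rw [mul_sub] at h9
      have h10 : y k w * L ≤ L := mul_le_of_le_one_left hL0 (hy_le1 w)
      rw [hTwv, hTwx]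
      linarith
  -- assembling the sum
  have hsplitx : R.fk V (y k) k x
      = y k vv * T vv x + ∑ w ∈ Finset.univ.erase vv, y k w * T w x := by
    rw [hfk x, ← Finset.add_sum_erase _ _ (Finset.mem_univ vv)]
  have hsplitv : 1 = y k vv + ∑ w ∈ Finset.univ.erase vv, y k w * T w v := by
    have h1 := hy_one vv
    rw [hfk] at h1
    rw [← Finset.add_sum_erase _ _ (Finset.mem_univ vv)] at h1
    rw [hT1 vv, mul_one] at h1
    rw [hvvv] at h1
    exact h1.symm
  have hNer : ((Finset.univ.erase vv).card : ℝ) ≤ N := by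
    have h3 : (Finset.univ.erase vv).card ≤ Fintype.card ↥V :=
      le_trans Finset.card_erase_le (le_of_eq rfl)
    have h4 : Fintype.card ↥V = N := Fintype.card_coe V
    exact_mod_cast h3.trans h4.le
  have hsum2 : (∑ w ∈ Finset.univ.erase vv, y k w * T w v) - (N:ℝ)*L
      ≤ ∑ w ∈ Finset.univ.erase vv, y k w * T w x := by
    have hper : ∀ w ∈ Finset.univ.erase vv, y k w * T w v - L ≤ y k w * T w x := by
      intro w hw
      apply hloss w
      intro h
      exact (Finset.mem_erase.1 hw).1 (Subtype.ext h)
    have h1 : ∑ w ∈ Finset.univ.erase vv, (y k w * T w v - L)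
        ≤ ∑ w ∈ Finset.univ.erase vv, y k w * T w x := Finset.sum_le_sum hper
    rw [Finset.sum_sub_distrib, Finset.sum_const, nsmul_eq_mul] at h1
    have h2 : ((Finset.univ.erase vv).card : ℝ) * L ≤ (N:ℝ)*L :=
      mul_le_mul_of_nonneg_right hNer hL0
    linarith
  have hgain : 1/2 * ((8*(k:ℝ)^2/(3*m))*t) ≤ y k vv * (T vv x - 1) := by
    apply mul_le_mul hyv (by linarith) (by positivity) (hy_pos vv).le
  have hfinal : 1 + 1/2 * ((8*(k:ℝ)^2/(3*m))*t) - (N:ℝ)*L ≤ R.fk V (y k) k x := by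
    rw [hsplitx]
    have h1 : y k vv * T vv x = y k vv * (T vv x - 1) + y k vv := by ring
    linarith [hsum2, hgain, hsplitv]
  have hNL : (N:ℝ)*L < 1/2 * ((8*(k:ℝ)^2/(3*m))*t) := by
    have h1 : (12*(N:ℝ)*β)*r₂^(2*k-1) < 4/(3*m) := by
      have h2 : (12*(N:ℝ)*β)*r₂^(2*k-1) ≤ (12*(N:ℝ)*β)*c₃ := by
        apply mul_le_mul_of_nonneg_left hkc.le
        exact mul_nonneg (by linarith) hβpos.le
      have h6 : (0:ℝ) ≤ 12*(N:ℝ)*β := mul_nonneg (by linarith) hβpos.le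
      have h4 : (0:ℝ) < 12*(N:ℝ)*β+1 := by linarith
      have h3 : (12*(N:ℝ)*β)*c₃ < 4/(3*m) := by
        have h5 : (0:ℝ) < 4/(3*(m:ℝ)) := by positivity
        have hlt : (12*(N:ℝ)*β)/(12*(N:ℝ)*β+1) < 1 := (div_lt_one h4).2 (by linarith)
        have heq : (12*(N:ℝ)*β)*c₃ = (4/(3*(m:ℝ)))*((12*(N:ℝ)*β)/(12*(N:ℝ)*β+1)) := by
          rw [hc₃]
          ring
        rw [heq]
        calc (4/(3*(m:ℝ)))*((12*(N:ℝ)*β)/(12*(N:ℝ)*β+1)) < (4/(3*(m:ℝ)))*1 :=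
              mul_lt_mul_of_pos_left hlt h5
          _ = 4/(3*(m:ℝ)) := mul_one _
      linarith
    have hk2t : (0:ℝ) < (k:ℝ)^2*t := by positivity
    have h7 : (N:ℝ)*L = ((12*(N:ℝ)*β)*r₂^(2*k-1))*((k:ℝ)^2*t) := by
      rw [hL, hs]; ring
    have h8 : ((12*(N:ℝ)*β)*r₂^(2*k-1))*((k:ℝ)^2*t) < (4/(3*m))*((k:ℝ)^2*t) :=
      mul_lt_mul_of_pos_right h1 hk2t
    have h9 : 1/2 * ((8*(k:ℝ)^2/(3*m))*t) = (4/(3*(m:ℝ)))*((k:ℝ)^2*t) := by ring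
    linarith
  linarith

end AverkovHenk
end
end
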